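/- arXiv:1407.5593 — 7 statements merged into one kernel-verified Lean document; each statement's English description precedes it below -/
import Mathlib

section
/- Let A ∈ ℝ^{M×M} be invertible, let x* be the (unique) solution of the consistent system Ax = b, and let the rows of A be partitioned into blocks A_1, …, A_k, each A_i ∈ ℝ^{M_i×M} of full row rank. For the cyclic block Kaczmarz iteration x_{j+1} = x_j + A_iᵀ(A_i A_iᵀ)⁻¹(b_i − A_i x_j) with i = (j mod k) + 1, there exists ε ∈ (0,1) such that for every initial point x_0 and every number of cycles q ≥ 1, ‖x_{qk} − x*‖₂ ≤ (1 − ε)^q ‖x_0 − x*‖₂; that is, the block Kaczmarz method converges exponentially in the number of cycles. -/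
open Matrix

lemma aux_isUnit_det_of_rank {m M : ℕ} (C : Matrix (Fin m) (Fin M) ℝ)
    (h : C.rank = m) : IsUnit (C * Cᵀ).det := by
  rw [← Matrix.isUnit_iff_isUnit_det, ← Matrix.mulVec_surjective_iff_isUnit]
  have hr : (C * Cᵀ).rank = m := by rw [Matrix.rank_self_mul_transpose, h]
  have : LinearMap.range (C * Cᵀ).mulVecLin = ⊤ := by
    apply Submodule.eq_top_of_finrank_eq
    simpa [Matrix.rank] using hr
  exact LinearMap.range_eq_top.mp this

lemma aux_Q_symm {m M : ℕ} (C : Matrix (Fin m) (Fin M) ℝ) :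
    (Cᵀ * (C * Cᵀ)⁻¹ * C)ᵀ = Cᵀ * (C * Cᵀ)⁻¹ * C := by
  have : ((C * Cᵀ)⁻¹)ᵀ = (C * Cᵀ)⁻¹ := by
    rw [Matrix.transpose_nonsing_inv, Matrix.transpose_mul, Matrix.transpose_transpose]
  simp [Matrix.transpose_mul, Matrix.transpose_transpose, this, Matrix.mul_assoc]

lemma aux_CQ {m M : ℕ} (C : Matrix (Fin m) (Fin M) ℝ) (hC : IsUnit (C * Cᵀ).det) :
    C * (Cᵀ * (C * Cᵀ)⁻¹ * C) = C := by
  rw [← Matrix.mul_assoc, ← Matrix.mul_assoc, Matrix.mul_nonsing_inv _ hC, Matrix.one_mul]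

lemma aux_Q_idem {m M : ℕ} (C : Matrix (Fin m) (Fin M) ℝ) (hC : IsUnit (C * Cᵀ).det) :
    (Cᵀ * (C * Cᵀ)⁻¹ * C) * (Cᵀ * (C * Cᵀ)⁻¹ * C) = Cᵀ * (C * Cᵀ)⁻¹ * C := by
  calc (Cᵀ * (C * Cᵀ)⁻¹ * C) * (Cᵀ * (C * Cᵀ)⁻¹ * C)
      = Cᵀ * (C * Cᵀ)⁻¹ * (C * (Cᵀ * (C * Cᵀ)⁻¹ * C)) := by
        simp only [Matrix.mul_assoc]
    _ = Cᵀ * (C * Cᵀ)⁻¹ * C := by rw [aux_CQ C hC]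

lemma aux_Cv_of_Qv {m M : ℕ} (C : Matrix (Fin m) (Fin M) ℝ) (hC : IsUnit (C * Cᵀ).det)
    (v : Fin M → ℝ) (hv : (Cᵀ * (C * Cᵀ)⁻¹ * C).mulVec v = 0) :
    C.mulVec v = 0 := by
  have h2 : C.mulVec ((Cᵀ * (C * Cᵀ)⁻¹ * C).mulVec v) = C.mulVec v := by
    rw [Matrix.mulVec_mulVec, ← Matrix.mul_assoc, ← Matrix.mul_assoc]
    rw [show C * Cᵀ * (C * Cᵀ)⁻¹ * C = C from by
      rw [Matrix.mul_nonsing_inv _ hC, Matrix.one_mul]]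
  rw [hv, Matrix.mulVec_zero] at h2
  exact h2.symm

/-- The Euclidean norm of a plain vector. -/
noncomputable def nE {M : ℕ} (u : Fin M → ℝ) : ℝ :=
  ‖(WithLp.equiv 2 (Fin M → ℝ)).symm u‖

lemma nE_nonneg {M : ℕ} (u : Fin M → ℝ) : 0 ≤ nE u := norm_nonneg _

lemma nE_sq {M : ℕ} (u : Fin M → ℝ) : nE u ^ 2 = u ⬝ᵥ u := by
  rw [nE, EuclideanSpace.norm_eq, Real.sq_sqrt (by positivity)]
  simp [dotProduct, sq, Real.norm_eq_abs, abs_mul_abs_self]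

lemma nE_eq_zero {M : ℕ} {u : Fin M → ℝ} (h : nE u = 0) : u = 0 := by
  have h2 : (WithLp.equiv 2 (Fin M → ℝ)).symm u = 0 := norm_eq_zero.mp h
  simpa using h2

lemma aux_pyth {M : ℕ} (Q : Matrix (Fin M) (Fin M) ℝ) (hsym : Qᵀ = Q)
    (hidem : Q * Q = Q) (u : Fin M → ℝ) :
    nE (u - Q.mulVec u) ^ 2 = nE u ^ 2 - nE (Q.mulVec u) ^ 2 := by
  rw [nE_sq, nE_sq, nE_sq]
  have hvm : ∀ w : Fin M → ℝ, Matrix.vecMul w Q = Q.mulVec w := by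
    intro w; nth_rewrite 1 [← hsym]; rw [Matrix.vecMul_transpose]
  have key : u ⬝ᵥ Q.mulVec u = Q.mulVec u ⬝ᵥ Q.mulVec u := by
    calc u ⬝ᵥ Q.mulVec u = Q.mulVec u ⬝ᵥ u := dotProduct_comm _ _
      _ = ((Q * Q).mulVec u) ⬝ᵥ u := by rw [hidem]
      _ = (Q.mulVec (Q.mulVec u)) ⬝ᵥ u := by rw [Matrix.mulVec_mulVec]
      _ = (Matrix.vecMul (Q.mulVec u) Q) ⬝ᵥ u := by rw [hvm]
      _ = Q.mulVec u ⬝ᵥ Q.mulVec u := by rw [← Matrix.dotProduct_mulVec]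
  have key2 : Q.mulVec u ⬝ᵥ u = Q.mulVec u ⬝ᵥ Q.mulVec u := by
    rw [dotProduct_comm, key]
  simp only [sub_dotProduct, dotProduct_sub, key, key2]
  ring

lemma aux_le_of_sq_le_sq {a b : ℝ} (ha : 0 ≤ a) (hb : 0 ≤ b) (h : a ^ 2 ≤ b ^ 2) :
    a ≤ b := by nlinarith

/-- For an invertible `A : ℝ^{M×M}` with consistent system `A x = b`
(solution `x*`), and a row-partition of `A` into full-row-rank blocks `B 1, …, B k`
(encoded by an equivalence `e` between the disjoint union of the block row-index sets and
`Fin M`), the cyclic block Kaczmarz iteration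
`x_{j+1} = x_j + A_iᵀ (A_i A_iᵀ)⁻¹ (b_i − A_i x_j)`, `i = j mod k`,
converges exponentially in the number of cycles: there is `ε ∈ (0,1)` such that for every
initial point `x 0` and every `q ≥ 1`, `‖x (qk) − x*‖ ≤ (1 − ε)^q ‖x 0 − x*‖`. -/
theorem block_kaczmarz_exponential_convergence
    {M k : ℕ} (hk : 0 < k) (m : Fin k → ℕ)
    (A : Matrix (Fin M) (Fin M) ℝ) (hA : IsUnit A.det)
    (e : ((i : Fin k) × Fin (m i)) ≃ Fin M)
    (B : (i : Fin k) → Matrix (Fin (m i)) (Fin M) ℝ)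
    (hB : ∀ (i : Fin k) (r : Fin (m i)), B i r = A (e ⟨i, r⟩))
    (hrank : ∀ i, (B i).rank = m i)
    (b : Fin M → ℝ) (xstar : EuclideanSpace ℝ (Fin M))
    (hsol : A.mulVec xstar = b) :
    ∃ ε : ℝ, 0 < ε ∧ ε < 1 ∧
      ∀ x : ℕ → EuclideanSpace ℝ (Fin M),
        (∀ (j : ℕ) (i : Fin k), (i : ℕ) = j % k →
          x (j + 1) = x j + (WithLp.equiv 2 (Fin M → ℝ)).symm
            ((B i)ᵀ.mulVec ((B i * (B i)ᵀ)⁻¹.mulVec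
              ((fun r => b (e ⟨i, r⟩)) - (B i).mulVec (x j))))) →
        ∀ q : ℕ, 1 ≤ q →
          ‖x (q * k) - xstar‖ ≤ (1 - ε) ^ q * ‖x 0 - xstar‖ := by
  classical
  have hC : ∀ i : Fin k, IsUnit (B i * (B i)ᵀ).det :=
    fun i => aux_isUnit_det_of_rank (B i) (hrank i)
  set Q : Fin k → Matrix (Fin M) (Fin M) ℝ :=
    fun i => (B i)ᵀ * (B i * (B i)ᵀ)⁻¹ * B i with hQdef
  set P : Fin k → Matrix (Fin M) (Fin M) ℝ := fun i => 1 - Q i with hPdef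
  set G : ℕ → Matrix (Fin M) (Fin M) ℝ :=
    fun n => Nat.rec 1 (fun n Gn => if h : n < k then P ⟨n, h⟩ * Gn else Gn) n with hGdef
  have hG0 : G 0 = 1 := rfl
  have hGsucc : ∀ (n : ℕ) (h : n < k), G (n + 1) = P ⟨n, h⟩ * G n := by
    intro n h; simp [hGdef, h]
  -- one projection step : Pythagoras
  have hP_mulVec : ∀ (i : Fin k) (w : Fin M → ℝ),
      (P i).mulVec w = w - (Q i).mulVec w := by
    intro i w
    rw [hPdef]
    simp [Matrix.sub_mulVec, Matrix.one_mulVec]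
  have hpyth : ∀ (i : Fin k) (w : Fin M → ℝ),
      nE ((P i).mulVec w) ^ 2 = nE w ^ 2 - nE ((Q i).mulVec w) ^ 2 := by
    intro i w
    rw [hP_mulVec]
    exact aux_pyth (Q i) (aux_Q_symm (B i)) (aux_Q_idem (B i) (hC i)) w
  have hPle : ∀ (i : Fin k) (w : Fin M → ℝ), nE ((P i).mulVec w) ≤ nE w := by
    intro i w
    refine aux_le_of_sq_le_sq (nE_nonneg _) (nE_nonneg _) ?_
    rw [hpyth]
    nlinarith [sq_nonneg (nE ((Q i).mulVec w))]
  -- monotone chain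
  have hGstep : ∀ (v : Fin M → ℝ) (n : ℕ),
      nE ((G (n + 1)).mulVec v) ≤ nE ((G n).mulVec v) := by
    intro v n
    by_cases h : n < k
    · rw [hGsucc n h, ← Matrix.mulVec_mulVec]
      exact hPle _ _
    · have : G (n + 1) = G n := by simp [hGdef, h]
      rw [this]
  have hGle : ∀ (v : Fin M → ℝ) (a c : ℕ), a ≤ c →
      nE ((G c).mulVec v) ≤ nE ((G a).mulVec v) := by
    intro v a c hac
    induction c, hac using Nat.le_induction with
    | base => exact le_refl _
    | succ n hn ih => exact le_trans (hGstep v n) ih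
  -- strict contraction on nonzero vectors
  have hFlt : ∀ v : Fin M → ℝ, v ≠ 0 → nE ((G k).mulVec v) < nE v := by
    intro v hv
    by_contra hcon
    push_neg at hcon
    have hle : nE ((G k).mulVec v) ≤ nE v := by
      have := hGle v 0 k (Nat.zero_le _)
      rwa [hG0, Matrix.one_mulVec] at this
    have heq : ∀ n, n ≤ k → nE ((G n).mulVec v) = nE v := by
      intro n hn
      have h1 : nE ((G k).mulVec v) ≤ nE ((G n).mulVec v) := hGle v n k hn
      have h2 : nE ((G n).mulVec v) ≤ nE ((G 0).mulVec v) := hGle v 0 n (Nat.zero_le _)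
      rw [hG0, Matrix.one_mulVec] at h2
      linarith
    have claim : ∀ n, n ≤ k → (G n).mulVec v = v ∧
        ∀ i : Fin k, (i : ℕ) < n → (B i).mulVec v = 0 := by
      intro n
      induction n with
      | zero =>
        intro _
        exact ⟨by rw [hG0, Matrix.one_mulVec], fun i h => absurd h (Nat.not_lt_zero _)⟩
      | succ n ih =>
        intro hn1
        have hnk : n < k := hn1
        obtain ⟨hGn, hBlt⟩ := ih (Nat.le_of_succ_le hn1)
        have hGn1 : (G (n + 1)).mulVec v = (P ⟨n, hnk⟩).mulVec v := by
          rw [hGsucc n hnk, ← Matrix.mulVec_mulVec, hGn]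
        have hqz : nE ((Q ⟨n, hnk⟩).mulVec v) = 0 := by
          have hp := hpyth ⟨n, hnk⟩ v
          have e1 : nE ((G (n + 1)).mulVec v) = nE v := heq (n + 1) hn1
          rw [← hGn1, e1] at hp
          have : nE ((Q ⟨n, hnk⟩).mulVec v) ^ 2 = 0 := by linarith
          have := pow_eq_zero_iff (n := 2) (by norm_num) |>.mp this
          exact this
        have hQv : (Q ⟨n, hnk⟩).mulVec v = 0 := nE_eq_zero hqz
        have hBv : (B ⟨n, hnk⟩).mulVec v = 0 :=
          aux_Cv_of_Qv (B ⟨n, hnk⟩) (hC _) v hQv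
        constructor
        · rw [hGn1, hP_mulVec, hQv, sub_zero]
        · intro i hi
          rcases Nat.lt_or_ge (i : ℕ) n with h | h
          · exact hBlt i h
          · have : (i : ℕ) = n := by omega
            have : i = ⟨n, hnk⟩ := Fin.ext this
            rw [this]; exact hBv
    have hBall := (claim k le_rfl).2
    have hAv : A.mulVec v = 0 := by
      funext r
      obtain ⟨⟨i, s⟩, hes⟩ : ∃ p, e p = r := ⟨e.symm r, e.apply_symm_apply r⟩
      have hrow : A r = B i s := by rw [hB i s, hes]
      have h0 : ((B i).mulVec v) s = 0 := by rw [hBall i i.isLt]; rfl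
      calc (A.mulVec v) r = ((B i).mulVec v) s := by simp [Matrix.mulVec, hrow]
        _ = 0 := h0
        _ = (0 : Fin M → ℝ) r := rfl
    have hinj : Function.Injective A.mulVec :=
      Matrix.mulVec_injective_iff_isUnit.mpr ((Matrix.isUnit_iff_isUnit_det A).mpr hA)
    exact hv (hinj (show A.mulVec v = A.mulVec 0 by rw [hAv, Matrix.mulVec_zero]))
  -- a uniform contraction constant
  have hcontr : ∃ c : ℝ, 0 ≤ c ∧ c < 1 ∧
      ∀ v : Fin M → ℝ, nE ((G k).mulVec v) ≤ c * nE v := by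
    rcases Nat.eq_zero_or_pos M with hM | hM
    · refine ⟨1 / 2, by norm_num, by norm_num, ?_⟩
      intro v
      have hv : v = 0 := by
        funext r; exact absurd r.isLt (by omega)
      subst hv
      simp only [Matrix.mulVec_zero]
      have : nE (0 : Fin M → ℝ) = 0 := by
        simp [nE]
      rw [this]; norm_num
    · haveI : Nonempty (Fin M) := ⟨⟨0, hM⟩⟩
      set L : EuclideanSpace ℝ (Fin M) →ₗ[ℝ] EuclideanSpace ℝ (Fin M) :=
        (WithLp.linearEquiv 2 ℝ (Fin M → ℝ)).symm.toLinearMap ∘ₗ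
          (G k).mulVecLin ∘ₗ (WithLp.linearEquiv 2 ℝ (Fin M → ℝ)).toLinearMap with hLdef
      have hLapply : ∀ v : EuclideanSpace ℝ (Fin M),
          L v = (WithLp.equiv 2 (Fin M → ℝ)).symm ((G k).mulVec v) := fun _ => rfl
      have hLnorm : ∀ v : EuclideanSpace ℝ (Fin M), ‖L v‖ = nE ((G k).mulVec v) :=
        fun v => rfl
      have hLcont : Continuous L := L.continuous_of_finiteDimensional
      obtain ⟨v0, hv0mem, hmax⟩ :=
        (isCompact_sphere (0 : EuclideanSpace ℝ (Fin M)) 1).exists_isMaxOn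
          (NormedSpace.sphere_nonempty.mpr zero_le_one)
          ((continuous_norm.comp hLcont).continuousOn)
      have hv0 : ‖v0‖ = 1 := mem_sphere_zero_iff_norm.mp hv0mem
      have hv0ne : (v0 : Fin M → ℝ) ≠ 0 := by
        intro h
        have : v0 = 0 := by simpa using h
        rw [this, norm_zero] at hv0; norm_num at hv0
      refine ⟨‖L v0‖, norm_nonneg _, ?_, ?_⟩
      · have := hFlt v0 hv0ne
        rw [hLnorm]
        have hnEv0 : nE (v0 : Fin M → ℝ) = ‖v0‖ := rfl
        rw [hnEv0, hv0] at this
        exact this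
      · intro v
        by_cases hv : v = 0
        · subst hv
          simp only [Matrix.mulVec_zero]
          have h0 : nE (0 : Fin M → ℝ) = 0 := by simp [nE]
          rw [h0]; simp
        · set w : EuclideanSpace ℝ (Fin M) :=
            (nE v)⁻¹ • (WithLp.equiv 2 (Fin M → ℝ)).symm v with hwdef
          have hnv : 0 < nE v := by
            rcases (nE_nonneg v).lt_or_eq with h | h
            · exact h
            · exact absurd (nE_eq_zero h.symm) hv
          have hwmem : w ∈ Metric.sphere (0 : EuclideanSpace ℝ (Fin M)) 1 := by
            rw [mem_sphere_zero_iff_norm, hwdef, norm_smul]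
            have : ‖(WithLp.equiv 2 (Fin M → ℝ)).symm v‖ = nE v := rfl
            rw [this, norm_inv, Real.norm_eq_abs, abs_of_pos hnv, inv_mul_cancel₀ hnv.ne']
          have hmw := hmax hwmem
          have hLw : L w = (nE v)⁻¹ • L ((WithLp.equiv 2 (Fin M → ℝ)).symm v) := by
            rw [hwdef, _root_.map_smul]
          have : ‖L w‖ = (nE v)⁻¹ * nE ((G k).mulVec v) := by
            rw [hLw, norm_smul, norm_inv, Real.norm_eq_abs, abs_of_pos hnv, hLnorm]
            rfl
          have hfin : (nE v)⁻¹ * nE ((G k).mulVec v) ≤ ‖L v0‖ := by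
            rw [← this]; exact hmw
          calc nE ((G k).mulVec v)
              = nE v * ((nE v)⁻¹ * nE ((G k).mulVec v)) := by
                field_simp
            _ ≤ nE v * ‖L v0‖ := by
                exact mul_le_mul_of_nonneg_left hfin hnv.le
            _ = ‖L v0‖ * nE v := mul_comm _ _
  obtain ⟨c, hc0, hc1, hcb⟩ := hcontr
  set c' : ℝ := max c (1 / 2) with hc'def
  have hc'0 : 0 < c' := lt_of_lt_of_le (by norm_num) (le_max_right _ _)
  have hc'1 : c' < 1 := max_lt hc1 (by norm_num)
  have hcb' : ∀ v : Fin M → ℝ, nE ((G k).mulVec v) ≤ c' * nE v := by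
    intro v
    exact le_trans (hcb v) (mul_le_mul_of_nonneg_right (le_max_left _ _) (nE_nonneg v))
  refine ⟨1 - c', by linarith, by linarith, ?_⟩
  intro x hx q _
  have h1c : (1 : ℝ) - (1 - c') = c' := by ring
  rw [h1c]
  -- one iteration step in error form
  have hbB : ∀ i : Fin k, (fun r => b (e ⟨i, r⟩)) = (B i).mulVec xstar := by
    intro i; funext r
    rw [← hsol]
    simp [Matrix.mulVec, hB i r]
  have hstep : ∀ (j : ℕ) (i : Fin k), (i : ℕ) = j % k →
      x (j + 1) - xstar = (P i).mulVec (x j - xstar) := by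
    intro j i hij
    rw [hx j i hij, hbB i]
    have hres : (B i)ᵀ.mulVec ((B i * (B i)ᵀ)⁻¹.mulVec
        ((B i).mulVec xstar - (B i).mulVec (x j)))
        = (Q i).mulVec ((xstar : Fin M → ℝ) - x j) := by
      rw [← Matrix.mulVec_sub, Matrix.mulVec_mulVec, Matrix.mulVec_mulVec]
    rw [hres]
    funext r
    have happ : ∀ (N : Matrix (Fin M) (Fin M) ℝ) (u : Fin M → ℝ), N.mulVec u r = N r ⬝ᵥ u :=
      fun _ _ => rfl
    show x j r + (Q i).mulVec ((xstar : Fin M → ℝ) - x j) r - xstar r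
      = (P i).mulVec ((x j : Fin M → ℝ) - xstar) r
    rw [hP_mulVec]
    have h1 : (Q i).mulVec ((xstar : Fin M → ℝ) - x j) =
        -(Q i).mulVec ((x j : Fin M → ℝ) - xstar) := by
      rw [← Matrix.mulVec_neg, neg_sub]
    rw [h1]
    simp only [Pi.sub_apply, Pi.neg_apply, PiLp.sub_apply]
    ring
  -- one full cycle
  have hcycle : ∀ (q : ℕ) (n : ℕ), n ≤ k →
      x (q * k + n) - xstar = (G n).mulVec (x (q * k) - xstar) := by
    intro q n
    induction n with
    | zero =>
      intro _
      rw [hG0, Matrix.one_mulVec]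
      rfl
    | succ n ih =>
      intro hn1
      have hnk : n < k := hn1
      have hmod : ((⟨n, hnk⟩ : Fin k) : ℕ) = (q * k + n) % k := by
        simp [Nat.mul_add_mod_of_lt hnk]
      have := hstep (q * k + n) ⟨n, hnk⟩ hmod
      rw [show q * k + (n + 1) = (q * k + n) + 1 from rfl, this, ih (Nat.le_of_succ_le hn1),
        Matrix.mulVec_mulVec, ← hGsucc n hnk]
  -- per-cycle contraction
  have hcyc : ∀ p : ℕ, ‖x ((p + 1) * k) - xstar‖ ≤ c' * ‖x (p * k) - xstar‖ := by
    intro p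
    have h1 : x ((p + 1) * k) - xstar = (G k).mulVec (x (p * k) - xstar) := by
      have : (p + 1) * k = p * k + k := by ring
      rw [this]
      exact hcycle p k le_rfl
    show nE ((x ((p + 1) * k) : Fin M → ℝ) - (xstar : Fin M → ℝ)) ≤
      c' * nE ((x (p * k) : Fin M → ℝ) - (xstar : Fin M → ℝ))
    rw [h1]
    exact hcb' ((x (p * k) : Fin M → ℝ) - xstar)
  -- induct over cycles
  have hmain : ∀ p : ℕ, ‖x (p * k) - xstar‖ ≤ c' ^ p * ‖x 0 - xstar‖ := by
    intro p
    induction p with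
    | zero => simp
    | succ p ih =>
      calc ‖x ((p + 1) * k) - xstar‖ ≤ c' * ‖x (p * k) - xstar‖ := hcyc p
        _ ≤ c' * (c' ^ p * ‖x 0 - xstar‖) := mul_le_mul_of_nonneg_left ih hc'0.le
        _ = c' ^ (p + 1) * ‖x 0 - xstar‖ := by ring
  exact hmain q
end

section
/- Let A ∈ ℝ^{M×M} be invertible with row blocks A_1, …, A_k partitioning its rows, and let P_i denote the orthogonal projection of ℝ^M onto Sp⊥(A_iᵀ), the orthogonal complement of the row space of A_i. Then the operator norm of the composition over one cycle is strictly less than one: ‖P_k ∘ P_{k−1} ∘ ⋯ ∘ P_1‖ < 1; equivalently, sup over unit vectors v ∈ ℝ^M of ‖P_k P_{k−1} ⋯ P_1 v‖₂ ≤ 1 − ε for some ε ∈ (0,1). -/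
open Matrix

/-- Let `A : ℝ^{M×M}` be invertible with rows partitioned into `k` blocks
(row `r` belongs to block `part r`), and let `P i` be the orthogonal projection of `ℝ^M` onto
the orthogonal complement of the span of the rows of block `i`. Then the operator norm of the
composition over one cycle, `P_k ∘ P_{k−1} ∘ ⋯ ∘ P_1`, is strictly less than one. -/
theorem cycle_of_projections_opNorm_lt_one
    {M k : ℕ}
    (A : Matrix (Fin M) (Fin M) ℝ) (hA : IsUnit A.det)
    (part : Fin M → Fin k)
    (S : Fin k → Submodule ℝ (EuclideanSpace ℝ (Fin M)))
    (hS : ∀ i, S i = Submodule.span ℝ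
      ((fun r => (WithLp.equiv 2 (Fin M → ℝ)).symm (A r)) '' {r | part r = i}))
    (P : Fin k → (EuclideanSpace ℝ (Fin M) →L[ℝ] EuclideanSpace ℝ (Fin M)))
    (hP : ∀ i, P i = ((S i)ᗮ).subtypeL.comp ((S i)ᗮ).orthogonalProjectionOnto) :
    ‖(List.ofFn P).reverse.prod‖ < 1 := by
  classical
  set E := EuclideanSpace ℝ (Fin M)
  set Q := (List.ofFn P).reverse.prod with hQdef
  -- pointwise facts about each `P i`
  have hPapply : ∀ i (v : E), P i v = (Submodule.orthogonalProjectionOnto (S i)ᗮ v : E) := by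
    intro i v; rw [hP i]; rfl
  have hsq : ∀ i (v : E),
      ‖v‖ ^ 2 = ‖(Submodule.orthogonalProjectionOnto (S i) v : E)‖ ^ 2 + ‖P i v‖ ^ 2 := by
    intro i v
    have := Submodule.norm_sq_eq_add_norm_sq_projection v (S i)
    rw [hPapply]
    simpa using this
  have hle : ∀ i (v : E), ‖P i v‖ ≤ ‖v‖ := by
    intro i v
    have h := hsq i v
    nlinarith [norm_nonneg (P i v), norm_nonneg v,
      norm_nonneg ((Submodule.orthogonalProjectionOnto (S i) v : E))]
  have hfix : ∀ i (v : E), ‖P i v‖ = ‖v‖ → P i v = v := by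
    intro i v hv
    have h := hsq i v
    rw [hv] at h
    have h0 : ‖(Submodule.orthogonalProjectionOnto (S i) v : E)‖ = 0 := by nlinarith [norm_nonneg ((Submodule.orthogonalProjectionOnto (S i) v : E))]
    have hproj : Submodule.orthogonalProjectionOnto (S i) v = 0 := by
      have := norm_eq_zero.mp h0
      exact Subtype.coe_injective (by simpa using this)
    have hmem : v ∈ (S i)ᗮ := Submodule.orthogonalProjectionOnto_eq_zero_iff.mp hproj
    rw [hPapply]
    exact Submodule.starProjection_eq_self_iff.mpr hmem
  -- list product facts
  have hlistle : ∀ (L : List (Fin k)) (v : E), ‖((L.map P).reverse.prod) v‖ ≤ ‖v‖ := by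
    intro L
    induction L with
    | nil => intro v; simp
    | cons a L ih =>
      intro v
      have hrw : ((a :: L).map P).reverse.prod = ((L.map P).reverse.prod) * (P a) := by
        simp [List.prod_append]
      rw [hrw, ContinuousLinearMap.mul_apply]
      exact (ih (P a v)).trans (hle a v)
  have hlist : ∀ (L : List (Fin k)) (v : E),
      ‖((L.map P).reverse.prod) v‖ = ‖v‖ → ∀ i ∈ L, P i v = v := by
    intro L
    induction L with
    | nil => intro v _ i hi; simp at hi
    | cons a L ih =>
      intro v hv i hi
      have hrw : ((a :: L).map P).reverse.prod = ((L.map P).reverse.prod) * (P a) := by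
        simp [List.prod_append]
      rw [hrw, ContinuousLinearMap.mul_apply] at hv
      have h1 : ‖((L.map P).reverse.prod) (P a v)‖ ≤ ‖P a v‖ := hlistle L (P a v)
      have h2 : ‖P a v‖ ≤ ‖v‖ := hle a v
      have heq : ‖P a v‖ = ‖v‖ := le_antisymm h2 (by rw [← hv] at h2 ⊢; linarith [h1, hv.ge])
      have ha : P a v = v := hfix a v heq
      rw [ha] at hv
      rcases List.mem_cons.mp hi with h | h
      · rw [h]; exact ha
      · exact ih v hv i h
  have hQlist : Q = ((List.finRange k).map P).reverse.prod := by
    rw [hQdef, List.ofFn_eq_map]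
  -- if a vector is fixed in norm by Q, it is zero
  have hkill : ∀ v : E, ‖Q v‖ = ‖v‖ → v = 0 := by
    intro v hv
    have hfixall : ∀ i, P i v = v := by
      intro i
      exact hlist (List.finRange k) v (by rw [← hQlist]; exact hv) i (List.mem_finRange i)
    have hmem : ∀ i, v ∈ (S i)ᗮ := by
      intro i
      have := hfixall i
      rw [hPapply] at this
      exact Submodule.starProjection_eq_self_iff.mp this
    have hrow : ∀ r : Fin M, (A.mulVec (fun j => v j)) r = 0 := by
      intro r
      have hrmem : (WithLp.equiv 2 (Fin M → ℝ)).symm (A r) ∈ S (part r) := by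
        rw [hS]
        exact Submodule.subset_span ⟨r, rfl, rfl⟩
      have hinner := (Submodule.mem_orthogonal (S (part r)) v).mp (hmem (part r))
        _ hrmem
      have : (inner ℝ ((WithLp.equiv 2 (Fin M → ℝ)).symm (A r)) v : ℝ) = 0 := hinner
      rw [PiLp.inner_apply] at this
      simpa [Matrix.mulVec, dotProduct, mul_comm] using this
    have hAv : A.mulVec (fun j => v j) = 0 := funext hrow
    have hv0 : (fun j => v j) = (0 : Fin M → ℝ) := by
      have h := congrArg (A⁻¹.mulVec) hAv
      rwa [Matrix.mulVec_mulVec, Matrix.nonsing_inv_mul A hA, Matrix.one_mulVec,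
        Matrix.mulVec_zero] at h
    ext j
    exact congrFun hv0 j
  -- trivial case M = 0
  by_cases hM : M = 0
  · subst hM
    have hsub : ∀ v : E, v = 0 := by
      intro v; ext j; exact j.elim0
    have : ‖Q‖ ≤ 0 := Q.opNorm_le_bound le_rfl (fun v => by
      rw [hsub v]; simp)
    linarith
  · -- maximize ‖Q v‖ on the unit sphere
    have hMpos : 0 < M := Nat.pos_of_ne_zero hM
    have hx₀ : (EuclideanSpace.single (⟨0, hMpos⟩ : Fin M) (1 : ℝ) : E) ∈
        Metric.sphere (0 : E) 1 := by
      simp [EuclideanSpace.norm_single]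
    obtain ⟨x, hxs, hmax⟩ := (isCompact_sphere (0 : E) 1).exists_isMaxOn
      ⟨_, hx₀⟩ (Q.continuous.norm.continuousOn)
    have hx1 : ‖x‖ = 1 := mem_sphere_zero_iff_norm.mp hxs
    have hQxle : ‖Q x‖ ≤ 1 := by
      have := hlistle (List.finRange k) x
      rw [← hQlist] at this
      rw [hx1] at this
      exact this
    have hQxlt : ‖Q x‖ < 1 := by
      rcases lt_or_eq_of_le hQxle with h | h
      · exact h
      · exfalso
        have : x = 0 := hkill x (by rw [h, hx1])
        rw [this] at hx1
        simp at hx1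
    have hQle : ‖Q‖ ≤ ‖Q x‖ := by
      apply ContinuousLinearMap.opNorm_le_of_unit_norm (norm_nonneg _)
      intro v hv
      exact hmax (mem_sphere_zero_iff_norm.mpr hv)
    exact lt_of_le_of_lt hQle hQxlt
end

section
/- (Halperin) Let M_1, M_2, …, M_k be closed subspaces of a real Hilbert space H, let M = ∩_{i=1}^k M_i, and let P_{M_i} denote the orthogonal projection onto M_i. Then for every x ∈ H, the iterated cyclic products of projections converge: lim_{q→∞} (P_{M_k} P_{M_{k−1}} ⋯ P_{M_1})^q x = P_M x, where P_M is the orthogonal projection onto the intersection M. -/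
open Filter Finset Topology
open scoped RealInnerProductSpace

set_option maxHeartbeats 1600000

/-- **Halperin.** Let `M 1, …, M k` be closed subspaces of a real Hilbert space
`H`, `W = ⋂ i, M i`, and `P i` the orthogonal projection onto `M i`. Then for every `x ∈ H`,
the iterated cyclic products of projections converge in norm:
`(P_k P_{k−1} ⋯ P_1)^q x → P_W x` as `q → ∞`. -/
theorem halperin_cyclic_projections_tendsto
    {H : Type*} [NormedAddCommGroup H] [InnerProductSpace ℝ H] [CompleteSpace H]
    {k : ℕ} (W : Fin k → Submodule ℝ H)
    (hclosed : ∀ i, IsClosed ((W i) : Set H))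
    [∀ i, Submodule.HasOrthogonalProjection (W i)]
    [Submodule.HasOrthogonalProjection (⨅ i, W i)]
    (P : Fin k → (H →L[ℝ] H))
    (hP : ∀ i, P i = (W i).subtypeL.comp (Submodule.orthogonalProjectionOnto (W i))) :
    ∀ x : H,
      Filter.Tendsto (fun q : ℕ => ((List.ofFn P).reverse.prod ^ q) x)
        Filter.atTop (nhds ((Submodule.orthogonalProjectionOnto (⨅ i, W i) x : H))) := by
  intro x
  rcases Nat.eq_zero_or_pos k with hk0 | hk
  · -- trivial case k = 0
    subst hk0
    have hW : (⨅ i : Fin 0, W i) = ⊤ := by simp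
    have hys : ∀ q : ℕ, ((List.ofFn P).reverse.prod ^ q) x = x := by
      intro q
      have : (List.ofFn P) = [] := by simp
      simp [this]
    have hx : ((Submodule.orthogonalProjectionOnto (⨅ i : Fin 0, W i) x : H)) = x := by
      have : x ∈ (⨅ i : Fin 0, W i) := by rw [hW]; trivial
      exact Submodule.starProjection_eq_self_iff.mpr this
    simp only [hys, hx]
    exact tendsto_const_nhds
  -- main case
  set T : H →L[ℝ] H := (List.ofFn P).reverse.prod with hT
  set w : H := (Submodule.orthogonalProjectionOnto (⨅ i, W i) x : H) with hwdef
  have hw_mem : w ∈ ⨅ i, W i := (Submodule.orthogonalProjectionOnto (⨅ i, W i) x).2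
  have hxw : ∀ v ∈ (⨅ i, W i), ⟪x - w, v⟫ = 0 := fun v hv =>
    Submodule.starProjection_inner_eq_zero x v hv
  -- cyclic index
  set c : ℕ → Fin k := fun n => ⟨n % k, Nat.mod_lt n hk⟩ with hc
  -- the iterated sequence
  set y : ℕ → H := fun n => Nat.rec x (fun m ym => P (c m) ym) n with hy
  have hy0 : y 0 = x := rfl
  have hystep : ∀ n, y (n + 1) = P (c n) (y n) := fun n => rfl
  have hmem : ∀ n, y (n + 1) ∈ W (c n) := by
    intro n
    rw [hystep, hP]
    exact (Submodule.orthogonalProjectionOnto (W (c n)) (y n)).2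
  have horth : ∀ n, ∀ z ∈ W (c n), ⟪y n - y (n + 1), z⟫ = 0 := by
    intro n z hz
    rw [hystep, hP]
    exact Submodule.starProjection_inner_eq_zero (y n) z hz
  set a : ℕ → ℝ := fun n => ‖y n‖ with ha
  set d : ℕ → ℝ := fun n => ‖y n - y (n + 1)‖ with hd
  have ha_nonneg : ∀ n, 0 ≤ a n := fun n => norm_nonneg _
  have hd_nonneg : ∀ n, 0 ≤ d n := fun n => norm_nonneg _
  have hpyth : ∀ n, a n ^ 2 = d n ^ 2 + a (n + 1) ^ 2 := by
    intro n
    have h0 : ⟪y n - y (n + 1), y (n + 1)⟫ = 0 := horth n _ (hmem n)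
    have : y n = (y n - y (n + 1)) + y (n + 1) := by abel
    calc a n ^ 2 = ‖(y n - y (n + 1)) + y (n + 1)‖ ^ 2 := by rw [ha]; rw [← this]
      _ = d n ^ 2 + a (n + 1) ^ 2 := by
          rw [norm_add_sq_real, h0]; ring
  have ha_anti : Antitone a := by
    apply antitone_nat_of_succ_le
    intro n
    have h := hpyth n
    nlinarith [ha_nonneg n, ha_nonneg (n + 1), sq_nonneg (d n)]
  set L : ℝ := ⨅ n, a n with hL
  have ha_bdd : BddBelow (Set.range a) := ⟨0, by rintro _ ⟨n, rfl⟩; exact ha_nonneg n⟩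
  have ha_tendsto : Tendsto a atTop (𝓝 L) := tendsto_atTop_ciInf ha_anti ha_bdd
  have hL_le : ∀ n, L ≤ a n := fun n => ciInf_le ha_bdd n
  have hL_nonneg : 0 ≤ L := le_ciInf ha_nonneg
  have hsum_range : ∀ N, ∑ n ∈ range N, d n ^ 2 = a 0 ^ 2 - a N ^ 2 := by
    intro N
    have : ∀ n, d n ^ 2 = a n ^ 2 - a (n + 1) ^ 2 := fun n => by linarith [hpyth n]
    calc ∑ n ∈ range N, d n ^ 2 = ∑ n ∈ range N, ((fun m => a m ^ 2) n - (fun m => a m ^ 2) (n+1)) := by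
          simp only [this]
      _ = a 0 ^ 2 - a N ^ 2 := Finset.sum_range_sub' (fun m => a m ^ 2) N
  have hd2_summable : Summable (fun n => d n ^ 2) := by
    apply summable_of_sum_range_le (c := a 0 ^ 2) (fun n => sq_nonneg (d n))
    intro N
    rw [hsum_range]
    nlinarith [sq_nonneg (a N)]
  set stot : ℝ := ∑' n, d n ^ 2 with hstot
  have hstot_nonneg : 0 ≤ stot := tsum_nonneg fun n => sq_nonneg _
  have hsum_le : ∀ s : Finset ℕ, ∑ n ∈ s, d n ^ 2 ≤ stot := fun s =>
    Summable.sum_le_tsum s (fun n _ => sq_nonneg _) hd2_summable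
  -- Cauchy-Schwarz for finite sums of d
  have hCS : ∀ s : Finset ℕ, (∑ n ∈ s, d n) ≤ Real.sqrt s.card * Real.sqrt stot := by
    intro s
    have h1 : (∑ n ∈ s, d n) ^ 2 ≤ s.card * ∑ n ∈ s, d n ^ 2 := sq_sum_le_card_mul_sum_sq
    have h2 : (∑ n ∈ s, d n) ^ 2 ≤ s.card * stot := by
      refine h1.trans ?_
      exact mul_le_mul_of_nonneg_left (hsum_le s) (Nat.cast_nonneg _)
    have h3 : (0:ℝ) ≤ ∑ n ∈ s, d n := Finset.sum_nonneg fun n _ => hd_nonneg n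
    calc (∑ n ∈ s, d n) = Real.sqrt ((∑ n ∈ s, d n) ^ 2) := (Real.sqrt_sq h3).symm
      _ ≤ Real.sqrt (s.card * stot) := Real.sqrt_le_sqrt h2
      _ = Real.sqrt s.card * Real.sqrt stot := Real.sqrt_mul (Nat.cast_nonneg _) _
  -- telescoping
  have htel : ∀ p q, p ≤ q → ‖y q - y p‖ ≤ ∑ i ∈ Finset.Ico p q, d i := by
    intro p q hpq
    have key : ∑ i ∈ Finset.Ico p q, (y (i + 1) - y i) = y q - y p := by
      rw [Finset.sum_Ico_eq_sub _ hpq, Finset.sum_range_sub (fun i => y i),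
        Finset.sum_range_sub (fun i => y i)]
      abel
    calc ‖y q - y p‖ = ‖∑ i ∈ Finset.Ico p q, (y (i + 1) - y i)‖ := by rw [key]
      _ ≤ ∑ i ∈ Finset.Ico p q, ‖y (i + 1) - y i‖ := norm_sum_le _ _
      _ = ∑ i ∈ Finset.Ico p q, d i := by
          refine Finset.sum_congr rfl fun i _ => ?_
          rw [hd, norm_sub_rev]
  set E : ℕ → ℝ := fun m => ∑ i ∈ Finset.Ico (m - k) m, d i with hE
  have hE_nonneg : ∀ m, 0 ≤ E m := fun m => Finset.sum_nonneg fun i _ => hd_nonneg i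
  -- key estimate
  have hkey : ∀ j m, j < m → |⟪y j - y (j + 1), y m⟫| ≤ d j * E m := by
    intro j m hjm
    set u : ℕ := m - (j + 1) with hu
    have hmu : m = j + 1 + u := by omega
    set v : ℕ := u / k with hv
    set t : ℕ := u % k with ht
    have htk : t < k := Nat.mod_lt u hk
    have huvt : u = k * v + t := (Nat.div_add_mod u k).symm
    set m' : ℕ := j + 1 + k * v with hm'
    have hmm' : m = m' + t := by omega
    have hcm' : c (j + k * v) = c j := by
      apply Fin.ext
      simp only [hc]
      exact Nat.add_mul_mod_self_left j k v
    have hym' : y m' ∈ W (c j) := by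
      have : y (j + k * v + 1) ∈ W (c (j + k * v)) := hmem _
      rw [hcm'] at this
      have hm'eq : m' = j + k * v + 1 := by omega
      rw [hm'eq]; exact this
    have h0 : ⟪y j - y (j + 1), y m'⟫ = 0 := horth j _ hym'
    have heq : ⟪y j - y (j + 1), y m⟫ = ⟪y j - y (j + 1), y m - y m'⟫ := by
      rw [inner_sub_right, h0, sub_zero]
    rw [heq]
    calc |⟪y j - y (j + 1), y m - y m'⟫| ≤ ‖y j - y (j + 1)‖ * ‖y m - y m'‖ :=
          abs_real_inner_le_norm _ _
      _ ≤ d j * E m := by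
          apply mul_le_mul_of_nonneg_left _ (hd_nonneg j)
          refine (htel m' m (by omega)).trans ?_
          apply Finset.sum_le_sum_of_subset_of_nonneg
          · apply Finset.Ico_subset_Ico_left
            omega
          · intro i _ _; exact hd_nonneg i
  -- main quantitative Cauchy estimate
  have hF8 : ∀ n m, n ≤ m → ‖y n - y m‖ ^ 2 ≤
      (a n ^ 2 - a m ^ 2) + 2 * (Real.sqrt stot * (Real.sqrt m * E m)) := by
    intro n m hnm
    have htele : y m - y n = ∑ j ∈ Finset.Ico n m, (y (j + 1) - y j) := by
      rw [Finset.sum_Ico_eq_sub _ hnm, Finset.sum_range_sub (fun i => y i),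
        Finset.sum_range_sub (fun i => y i)]
      abel
    have hexp : ‖y n - y m‖ ^ 2 = (a n ^ 2 - a m ^ 2) + 2 * ⟪y m - y n, y m⟫ := by
      rw [norm_sub_sq_real, inner_sub_left, real_inner_self_eq_norm_sq]
      have : ⟪y n, y m⟫ = ⟪y m, y n⟫ := real_inner_comm _ _
      rw [this]; ring
    have hbound : ⟪y m - y n, y m⟫ ≤ (∑ j ∈ Finset.Ico n m, d j) * E m := by
      rw [htele, sum_inner]
      calc ∑ j ∈ Finset.Ico n m, ⟪y (j + 1) - y j, y m⟫
          ≤ ∑ j ∈ Finset.Ico n m, d j * E m := by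
            refine Finset.sum_le_sum fun j hj => ?_
            have hjm : j < m := (Finset.mem_Ico.mp hj).2
            have h1 : ⟪y (j + 1) - y j, y m⟫ = -⟪y j - y (j + 1), y m⟫ := by
              rw [← inner_neg_left]; congr 1; abel
            rw [h1]
            have := hkey j m hjm
            have h2 := neg_le_abs (⟪y j - y (j + 1), y m⟫)
            linarith [abs_nonneg (⟪y j - y (j + 1), y m⟫), neg_abs_le (⟪y j - y (j + 1), y m⟫)]
        _ = (∑ j ∈ Finset.Ico n m, d j) * E m := by rw [← Finset.sum_mul]
    have hsd : (∑ j ∈ Finset.Ico n m, d j) ≤ Real.sqrt m * Real.sqrt stot := by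
      refine (hCS (Finset.Ico n m)).trans ?_
      apply mul_le_mul_of_nonneg_right _ (Real.sqrt_nonneg _)
      apply Real.sqrt_le_sqrt
      rw [Nat.card_Ico]
      exact_mod_cast Nat.sub_le m n
    have hprod : (∑ j ∈ Finset.Ico n m, d j) * E m ≤ (Real.sqrt m * Real.sqrt stot) * E m :=
      mul_le_mul_of_nonneg_right hsd (hE_nonneg m)
    rw [hexp]
    nlinarith [hbound, hprod]
  -- summability of E^2
  have hdouble : ∀ N, ∑ m ∈ range N, (∑ i ∈ Finset.Ico (m - k) m, d i ^ 2) ≤ k * stot := by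
    intro N
    have step1 : ∀ m ∈ range N, (∑ i ∈ Finset.Ico (m - k) m, d i ^ 2)
        = ∑ i ∈ range N, (if i ∈ Finset.Ico (m - k) m then d i ^ 2 else 0) := by
      intro m hm
      rw [Finset.sum_ite_mem]
      congr 1
      symm
      rw [Finset.inter_eq_right]
      intro i hi
      have h1 := (Finset.mem_Ico.mp hi).2
      have h2 := Finset.mem_range.mp hm
      exact Finset.mem_range.mpr (lt_trans h1 h2)
    rw [Finset.sum_congr rfl step1, Finset.sum_comm]
    have inner_le : ∀ i ∈ range N,
        (∑ m ∈ range N, if i ∈ Finset.Ico (m - k) m then d i ^ 2 else 0) ≤ k * d i ^ 2 := by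
      intro i _
      have : (∑ m ∈ range N, if i ∈ Finset.Ico (m - k) m then d i ^ 2 else 0)
          = ∑ m ∈ (range N).filter (fun m => i ∈ Finset.Ico (m - k) m), d i ^ 2 := by
        rw [Finset.sum_filter]
      rw [this]
      have hsub : (range N).filter (fun m => i ∈ Finset.Ico (m - k) m)
          ⊆ Finset.Ico (i + 1) (i + k + 1) := by
        intro m hm
        have hm2 := (Finset.mem_filter.mp hm).2
        rw [Finset.mem_Ico] at hm2
        rw [Finset.mem_Ico]
        omega
      calc ∑ m ∈ (range N).filter (fun m => i ∈ Finset.Ico (m - k) m), d i ^ 2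
          ≤ ∑ m ∈ Finset.Ico (i + 1) (i + k + 1), d i ^ 2 :=
            Finset.sum_le_sum_of_subset_of_nonneg hsub (fun _ _ _ => sq_nonneg _)
        _ = k * d i ^ 2 := by
            rw [Finset.sum_const, Nat.card_Ico]
            have : i + k + 1 - (i + 1) = k := by omega
            rw [this, nsmul_eq_mul]
    calc (∑ i ∈ range N, ∑ m ∈ range N, if i ∈ Finset.Ico (m - k) m then d i ^ 2 else 0)
        ≤ ∑ i ∈ range N, k * d i ^ 2 := Finset.sum_le_sum inner_le
      _ = k * ∑ i ∈ range N, d i ^ 2 := by rw [Finset.mul_sum]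
      _ ≤ k * stot := by
          apply mul_le_mul_of_nonneg_left (hsum_le _) (Nat.cast_nonneg _)
  have hE2_summable : Summable (fun m => E m ^ 2) := by
    apply summable_of_sum_range_le (c := k * (k * stot)) (fun m => sq_nonneg _)
    intro N
    have h1 : ∀ m ∈ range N, E m ^ 2 ≤ k * ∑ i ∈ Finset.Ico (m - k) m, d i ^ 2 := by
      intro m _
      have hcard : ((Finset.Ico (m - k) m).card : ℝ) ≤ k := by
        rw [Nat.card_Ico]
        exact_mod_cast Nat.sub_le_of_le_add (by omega)
      calc E m ^ 2 ≤ (Finset.Ico (m - k) m).card * ∑ i ∈ Finset.Ico (m - k) m, d i ^ 2 :=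
            sq_sum_le_card_mul_sum_sq
        _ ≤ k * ∑ i ∈ Finset.Ico (m - k) m, d i ^ 2 := by
            apply mul_le_mul_of_nonneg_right hcard
            exact Finset.sum_nonneg fun i _ => sq_nonneg _
    calc ∑ m ∈ range N, E m ^ 2 ≤ ∑ m ∈ range N, k * ∑ i ∈ Finset.Ico (m - k) m, d i ^ 2 :=
          Finset.sum_le_sum h1
      _ = k * ∑ m ∈ range N, ∑ i ∈ Finset.Ico (m - k) m, d i ^ 2 := by rw [Finset.mul_sum]
      _ ≤ k * (k * stot) := mul_le_mul_of_nonneg_left (hdouble N) (Nat.cast_nonneg _)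
  -- frequently √m * E m is small
  have hfreq : ∀ ε : ℝ, 0 < ε → ∃ᶠ m : ℕ in atTop, Real.sqrt m * E m < ε := by
    intro ε hε
    by_contra hcon
    rw [Filter.not_frequently] at hcon
    simp only [not_lt] at hcon
    rw [Filter.eventually_atTop] at hcon
    obtain ⟨N, hN⟩ := hcon
    have key : ∀ m : ℕ, ε ^ 2 / (((m + (N + 1) : ℕ)) : ℝ) ≤ E (m + (N + 1)) ^ 2 := by
      intro m
      set M : ℕ := m + (N + 1) with hM
      have h1 : ε ≤ Real.sqrt (M : ℝ) * E M := hN M (by omega)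
      have h2 : (0:ℝ) < ((M : ℕ) : ℝ) := by exact_mod_cast (by omega : 0 < M)
      rw [div_le_iff₀ h2]
      calc ε ^ 2 ≤ (Real.sqrt (M : ℝ) * E M) ^ 2 := by
            apply sq_le_sq' _ h1
            nlinarith [Real.sqrt_nonneg ((M : ℕ) : ℝ), hE_nonneg M]
        _ = E M ^ 2 * ((M : ℕ) : ℝ) := by
            rw [mul_pow, Real.sq_sqrt (le_of_lt h2)]; ring
    have hsummable : Summable (fun m : ℕ => ε ^ 2 / ((m + (N + 1) : ℕ) : ℝ)) := by
      have hshift : Summable (fun m : ℕ => E (m + (N + 1)) ^ 2) :=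
        (summable_nat_add_iff (f := fun m => E m ^ 2) (N + 1)).mpr hE2_summable
      exact Summable.of_nonneg_of_le (fun m => by positivity) key hshift
    have hsummable2 : Summable (fun m : ℕ => 1 / ((m + (N + 1) : ℕ) : ℝ)) := by
      have := hsummable.mul_left (ε ^ 2)⁻¹
      refine this.congr fun m => ?_
      field_simp
    have hsummable3 : Summable (fun m : ℕ => 1 / (m : ℝ)) := by
      rw [← summable_nat_add_iff (N + 1)]
      exact hsummable2.congr fun m => by norm_num
    exact Real.not_summable_one_div_natCast hsummable3
  -- extract subsequence
  have hMCP : MapClusterPt (0 : ℝ) atTop (fun m : ℕ => Real.sqrt m * E m) := by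
    rw [mapClusterPt_iff_frequently]
    intro s hs
    obtain ⟨ε, hε, hball⟩ := Metric.mem_nhds_iff.mp hs
    refine (hfreq ε hε).mono fun m hm => ?_
    apply hball
    rw [Metric.mem_ball, Real.dist_eq, sub_zero, abs_of_nonneg]
    · exact hm
    · exact mul_nonneg (Real.sqrt_nonneg _) (hE_nonneg m)
  obtain ⟨φ, hφ_mono, hφ_tendsto⟩ := Filter.subseq_tendsto_of_neBot hMCP
  -- the subsequence y ∘ φ is Cauchy
  have ha2_tendsto : Tendsto (fun n => a n ^ 2) atTop (𝓝 (L ^ 2)) := ha_tendsto.pow 2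
  have hcauchy : CauchySeq (y ∘ φ) := by
    rw [Metric.cauchySeq_iff']
    intro ε hε
    have h1 : Tendsto (fun s => a (φ s) ^ 2) atTop (𝓝 (L ^ 2)) :=
      ha2_tendsto.comp hφ_mono.tendsto_atTop
    have h2 : ∀ᶠ s in atTop, a (φ s) ^ 2 < L ^ 2 + ε ^ 2 / 4 := by
      apply h1.eventually_lt_const
      nlinarith
    have h3 : ∀ᶠ s in atTop,
        2 * (Real.sqrt stot * (Real.sqrt (φ s) * E (φ s))) < ε ^ 2 / 2 := by
      have hc : Tendsto (fun s => 2 * (Real.sqrt stot * (Real.sqrt (φ s) * E (φ s))))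
          atTop (𝓝 (2 * (Real.sqrt stot * 0))) :=
        (hφ_tendsto.const_mul (Real.sqrt stot)).const_mul 2
      rw [mul_zero, mul_zero] at hc
      apply hc.eventually_lt_const
      nlinarith
    obtain ⟨N, hN⟩ := (h2.and h3).exists_forall_of_atTop
    refine ⟨N, fun s hs => ?_⟩
    have hmono : φ N ≤ φ s := hφ_mono.monotone hs
    have hF := hF8 (φ N) (φ s) hmono
    have hA : a (φ N) ^ 2 - a (φ s) ^ 2 ≤ a (φ N) ^ 2 - L ^ 2 := by
      nlinarith [hL_le (φ s), hL_nonneg]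
    have hB := (hN N le_rfl).1
    have hC := (hN s hs).2
    have hsq : ‖y (φ N) - y (φ s)‖ ^ 2 < ε ^ 2 := by nlinarith
    have hd1 : dist ((y ∘ φ) s) ((y ∘ φ) N) = ‖y (φ N) - y (φ s)‖ := by
      rw [Function.comp_apply, Function.comp_apply, dist_eq_norm, norm_sub_rev]
    rw [hd1]
    nlinarith [norm_nonneg (y (φ N) - y (φ s))]
  obtain ⟨v, hv⟩ := cauchySeq_tendsto_of_complete hcauchy
  -- d tends to zero
  have hd0 : Tendsto d atTop (𝓝 0) := by
    have h1 : Tendsto (fun n => d n ^ 2) atTop (𝓝 0) := hd2_summable.tendsto_atTop_zero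
    have h2 : Tendsto (fun n => Real.sqrt (d n ^ 2)) atTop (𝓝 (Real.sqrt 0)) :=
      (Real.continuous_sqrt.tendsto 0).comp h1
    rw [Real.sqrt_zero] at h2
    refine h2.congr fun n => ?_
    rw [Real.sqrt_sq (hd_nonneg n)]
  -- the limit v lies in every W i
  have hvW : ∀ i : Fin k, v ∈ W i := by
    intro i
    set ψ : ℕ → ℕ := fun s => k * (φ s / k + 1) + (i : ℕ) with hψ
    have hcψ : ∀ s, c (ψ s) = i := by
      intro s
      apply Fin.ext
      simp only [hc, hψ]
      rw [Nat.mul_add_mod]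
      exact Nat.mod_eq_of_lt i.isLt
    have hmemψ : ∀ s, y (ψ s + 1) ∈ W i := by
      intro s
      have := hmem (ψ s)
      rwa [hcψ s] at this
    have hle : ∀ s, φ s ≤ ψ s := by
      intro s
      have h1 := Nat.div_add_mod (φ s) k
      have h2 := Nat.mod_lt (φ s) hk
      have h3 : k * (φ s / k + 1) = k * (φ s / k) + k := by ring
      simp only [hψ]
      omega
    have hub : ∀ s, ψ s + 1 ≤ φ s + 2 * k := by
      intro s
      have h1 := Nat.div_add_mod (φ s) k
      have h2 : (i : ℕ) < k := i.isLt
      have h3 : k * (φ s / k + 1) = k * (φ s / k) + k := by ring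
      simp only [hψ]
      omega
    have hnorm : ∀ s, ‖y (ψ s + 1) - y (φ s)‖ ≤ ∑ j ∈ range (2 * k), d (φ s + j) := by
      intro s
      refine (htel (φ s) (ψ s + 1) (by have := hle s; omega)).trans ?_
      have hsub : Finset.Ico (φ s) (ψ s + 1) ⊆ Finset.Ico (φ s) (φ s + 2 * k) := by
        apply Finset.Ico_subset_Ico_right (hub s)
      refine (Finset.sum_le_sum_of_subset_of_nonneg hsub fun j _ _ => hd_nonneg j).trans_eq ?_
      rw [Finset.sum_Ico_eq_sum_range]
      simp
    have hzero : Tendsto (fun s => ∑ j ∈ range (2 * k), d (φ s + j)) atTop (𝓝 0) := by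
      have : ∀ j ∈ range (2 * k), Tendsto (fun s => d (φ s + j)) atTop (𝓝 0) := by
        intro j _
        exact hd0.comp ((tendsto_atTop_mono (fun s => Nat.le_add_right _ _))
          hφ_mono.tendsto_atTop)
      have hsum := tendsto_finset_sum (range (2 * k)) this
      simpa using hsum
    have hdiff : Tendsto (fun s => y (ψ s + 1) - y (φ s)) atTop (𝓝 0) :=
      squeeze_zero_norm hnorm hzero
    have htend : Tendsto (fun s => y (ψ s + 1)) atTop (𝓝 v) := by
      have := hv.add hdiff
      rw [add_zero] at this
      refine this.congr fun s => ?_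
      simp [Function.comp]
    exact (hclosed i).mem_of_tendsto htend (Filter.Eventually.of_forall hmemψ)
  have hvinf : v ∈ ⨅ i, W i := (Submodule.mem_iInf W).mpr hvW
  -- inner products with vectors in the intersection are conserved
  have hinner : ∀ n, ∀ u ∈ ⨅ i, W i, ⟪y n, u⟫ = ⟪x, u⟫ := by
    intro n
    induction n with
    | zero => intro u _; rfl
    | succ n ih =>
      intro u hu
      have hu' : u ∈ W (c n) := (Submodule.mem_iInf W).mp hu (c n)
      have h0 : ⟪y n - y (n + 1), u⟫ = 0 := horth n u hu'
      rw [inner_sub_left, sub_eq_zero] at h0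
      rw [← h0]
      exact ih u hu
  -- norm of v equals L
  have hvnorm : ‖v‖ = L := by
    have h1 : Tendsto (fun s => a (φ s)) atTop (𝓝 ‖v‖) := hv.norm
    have h2 : Tendsto (fun s => a (φ s)) atTop (𝓝 L) :=
      ha_tendsto.comp hφ_mono.tendsto_atTop
    exact tendsto_nhds_unique h1 h2
  -- L² = ⟪x, v⟫ = ⟪w, v⟫
  have hLsq : L ^ 2 = ⟪w, v⟫ := by
    have h1 : Tendsto (fun s => ⟪(y ∘ φ) s, v⟫) atTop (𝓝 ⟪v, v⟫) :=
      hv.inner tendsto_const_nhds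
    have h2 : (fun s => ⟪(y ∘ φ) s, v⟫) = fun _ => ⟪x, v⟫ := by
      funext s
      exact hinner (φ s) v hvinf
    rw [h2] at h1
    have h3 : ⟪x, v⟫ = ⟪v, v⟫ := tendsto_nhds_unique tendsto_const_nhds h1
    have h4 : ⟪x, v⟫ = ⟪w, v⟫ := by
      have := hxw v hvinf
      rw [inner_sub_left, sub_eq_zero] at this
      exact this
    calc L ^ 2 = ‖v‖ ^ 2 := by rw [hvnorm]
      _ = ⟪v, v⟫ := (real_inner_self_eq_norm_sq v).symm
      _ = ⟪x, v⟫ := h3.symm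
      _ = ⟪w, v⟫ := h4
  -- L ≤ ‖w‖
  have hLlew : L ≤ ‖w‖ := by
    have h1 : ⟪w, v⟫ ≤ ‖w‖ * ‖v‖ := real_inner_le_norm w v
    rw [hvnorm] at h1
    rcases eq_or_lt_of_le hL_nonneg with h0 | h0
    · rw [← h0]; exact norm_nonneg w
    · have h2 : L * L ≤ ‖w‖ * L := by nlinarith
      exact le_of_mul_le_mul_right h2 h0
  -- ‖w‖ ≤ L
  have hwleL : ‖w‖ ≤ L := by
    have hwa : ∀ n, ‖w‖ ≤ a n := by
      intro n
      have h1 : ⟪y n, w⟫ = ⟪x, w⟫ := hinner n w hw_mem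
      have h2 : ⟪x, w⟫ = ‖w‖ ^ 2 := by
        have h3 := hxw w hw_mem
        rw [inner_sub_left, sub_eq_zero] at h3
        rw [h3, real_inner_self_eq_norm_sq]
      have h4 : ⟪y n, w⟫ ≤ a n * ‖w‖ := real_inner_le_norm _ _
      rw [h1, h2] at h4
      rcases eq_or_lt_of_le (norm_nonneg w) with h0 | h0
      · rw [← h0]; exact ha_nonneg n
      · nlinarith
    exact le_ciInf hwa
  have hLw : ‖w‖ = L := le_antisymm hwleL hLlew
  -- conclude: y n → w
  have hnormsq : ∀ n, ‖y n - w‖ ^ 2 = a n ^ 2 - ‖w‖ ^ 2 := by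
    intro n
    have h1 : ⟪y n, w⟫ = ‖w‖ ^ 2 := by
      rw [hinner n w hw_mem]
      have h3 := hxw w hw_mem
      rw [inner_sub_left, sub_eq_zero] at h3
      rw [h3, real_inner_self_eq_norm_sq]
    rw [norm_sub_sq_real, h1]
    ring
  have hyw : Tendsto y atTop (𝓝 w) := by
    have h1 : Tendsto (fun n => ‖y n - w‖ ^ 2) atTop (𝓝 0) := by
      have h2 : Tendsto (fun n => a n ^ 2 - ‖w‖ ^ 2) atTop (𝓝 (L ^ 2 - ‖w‖ ^ 2)) :=
        ha2_tendsto.sub_const _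
      rw [← hLw, sub_self] at h2
      exact h2.congr fun n => (hnormsq n).symm
    have h3 : Tendsto (fun n => ‖y n - w‖) atTop (𝓝 0) := by
      have h4 : Tendsto (fun n => Real.sqrt (‖y n - w‖ ^ 2)) atTop (𝓝 (Real.sqrt 0)) :=
        (Real.continuous_sqrt.tendsto 0).comp h1
      rw [Real.sqrt_zero] at h4
      exact h4.congr fun n => Real.sqrt_sq (norm_nonneg _)
    rw [tendsto_iff_norm_sub_tendsto_zero]
    exact h3
  -- identify the iterates with the sequence y
  have hpart : ∀ (m r : ℕ), r ≤ k →
      (((List.ofFn P).take r).reverse.prod) (y (k * m)) = y (k * m + r) := by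
    intro m r
    induction r with
    | zero => intro _; simp
    | succ r ih =>
      intro hrk
      have hrk' : r < k := hrk
      have htake : (List.ofFn P).take (r + 1) = (List.ofFn P).take r ++ [P ⟨r, hrk'⟩] := by
        rw [List.take_succ]
        congr
        rw [List.getElem?_eq_getElem (by simpa using hrk')]
        simp
      rw [htake, List.reverse_append]
      simp only [List.reverse_singleton, List.singleton_append, List.prod_cons,
        ContinuousLinearMap.mul_apply]
      rw [ih (le_of_lt hrk')]
      have hcn : c (k * m + r) = ⟨r, hrk'⟩ := by
        apply Fin.ext
        simp only [hc]
        rw [Nat.mul_add_mod]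
        exact Nat.mod_eq_of_lt hrk'
      rw [← hcn, ← hystep, Nat.add_assoc]
  have hTy : ∀ m, T (y (k * m)) = y (k * (m + 1)) := by
    intro m
    have h1 : (List.ofFn P).take k = List.ofFn P := by
      apply List.take_of_length_le
      simp
    have h2 := hpart m k le_rfl
    rw [h1] at h2
    rw [hT, h2]
    congr 1
  have hTq : ∀ q, (T ^ q) x = y (k * q) := by
    intro q
    induction q with
    | zero => simp [hy0]
    | succ q ih =>
      rw [pow_succ', ContinuousLinearMap.mul_apply, ih, hTy]
  have hfinal : Tendsto (fun q => (T ^ q) x) atTop (𝓝 w) := by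
    have hcomp : Tendsto (fun q => k * q) atTop atTop :=
      tendsto_atTop_atTop_of_monotone (fun p q h => Nat.mul_le_mul_left k h)
        (fun b => ⟨b, Nat.le_mul_of_pos_left b hk⟩)
    have := hyw.comp hcomp
    refine this.congr fun q => ?_
    exact (hTq q).symm
  exact hfinal
end

section
/- (Galantai) Let A ∈ ℝ^{M×M} be invertible, x* the solution of the consistent system Ax = b, and A_1, …, A_k a row‑partition of A with A_i ∈ ℝ^{M_i×M} of full row rank and ∑ M_i = M. For each i let L_i be the lower‑triangular Cholesky factor with A_i A_iᵀ = L_i L_iᵀ, set X_i = A_iᵀ L_i^{−T} ∈ ℝ^{M×M_i}, and let X = [X_1, …, X_k] ∈ ℝ^{M×M} be the concatenation. Then for every x_0 and every integer q ≥ 1, the block Kaczmarz iterates satisfy ‖x_{qk} − x*‖₂² ≤ (1 − det(XᵀX))^q ‖x_0 − x*‖₂². -/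
open Matrix

section GalantaiAux

lemma galantai_dp_self_nonneg {α : Type*} [Fintype α] (v : α → ℝ) : 0 ≤ v ⬝ᵥ v :=
  Finset.sum_nonneg fun _ _ => mul_self_nonneg _

lemma galantai_dp_cs {α : Type*} [Fintype α] (w u : α → ℝ) :
    (w ⬝ᵥ u) ^ 2 ≤ (w ⬝ᵥ w) * (u ⬝ᵥ u) := by
  simpa [dotProduct, sq] using Finset.sum_mul_sq_le_sq_mul_sq Finset.univ w u

lemma galantai_dp_mul_self {α β : Type*} [Fintype α] [Fintype β] (K : Matrix α β ℝ)
    (v : α → ℝ) : v ⬝ᵥ ((K * Kᵀ) *ᵥ v) = (Kᵀ *ᵥ v) ⬝ᵥ (Kᵀ *ᵥ v) := by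
  rw [← Matrix.mulVec_mulVec, Matrix.dotProduct_mulVec v K, ← Matrix.mulVec_transpose]

lemma galantai_mulVec_sum {α β γ : Type*} [Fintype β] (A : Matrix α β ℝ) (s : Finset γ)
    (f : γ → β → ℝ) : A *ᵥ (∑ j ∈ s, f j) = ∑ j ∈ s, A *ᵥ f j := by
  rw [← Matrix.mulVecLin_apply, map_sum]
  simp [Matrix.mulVecLin_apply]

lemma galantai_lemZ {α β : Type*} [Fintype α] [Fintype β] (Z : Matrix α β ℝ)
    (hyp : ∀ v : α → ℝ, (Zᵀ *ᵥ v) ⬝ᵥ (Zᵀ *ᵥ v) ≤ v ⬝ᵥ v) :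
    ∀ u : β → ℝ, (Z *ᵥ u) ⬝ᵥ (Z *ᵥ u) ≤ u ⬝ᵥ u := by
  intro u
  set b := (Z *ᵥ u) ⬝ᵥ (Z *ᵥ u) with hb
  have hb0 : 0 ≤ b := galantai_dp_self_nonneg _
  have key : b = (Zᵀ *ᵥ (Z *ᵥ u)) ⬝ᵥ u := by
    rw [hb, Matrix.dotProduct_mulVec, Matrix.mulVec_transpose]
  have h2 : b ^ 2 ≤ ((Zᵀ *ᵥ (Z *ᵥ u)) ⬝ᵥ (Zᵀ *ᵥ (Z *ᵥ u))) * (u ⬝ᵥ u) := by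
    rw [key]; exact galantai_dp_cs _ _
  have h3 : ((Zᵀ *ᵥ (Z *ᵥ u)) ⬝ᵥ (Zᵀ *ᵥ (Z *ᵥ u))) ≤ b := hyp _
  rcases eq_or_lt_of_le hb0 with h | h
  · exact le_trans h.symm.le (galantai_dp_self_nonneg u)
  · have : b * b ≤ b * (u ⬝ᵥ u) := by nlinarith [galantai_dp_self_nonneg u]
    exact le_of_mul_le_mul_left this h

lemma galantai_lemA {n : Type*} [Fintype n] [DecidableEq n] {P : Matrix n n ℝ}
    (hpsd : P.PosSemidef)
    (hle : ∀ v : n → ℝ, v ⬝ᵥ P.mulVec v ≤ v ⬝ᵥ v) :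
    P.det ≤ 1 ∧ ∀ v : n → ℝ, P.det * (v ⬝ᵥ v) ≤ v ⬝ᵥ P.mulVec v := by
  have hH : P.IsHermitian := hpsd.1
  set μ := hH.eigenvalues with hμ
  have h0 : ∀ i, 0 ≤ μ i := hpsd.eigenvalues_nonneg
  have h1 : ∀ i, μ i ≤ 1 := by
    intro i
    have hv := hH.mulVec_eigenvectorBasis i
    set v : n → ℝ := ⇑(hH.eigenvectorBasis i) with hvdef
    have hnorm : ‖hH.eigenvectorBasis i‖ = 1 := hH.eigenvectorBasis.orthonormal.1 i
    have hvv : v ⬝ᵥ v = 1 := by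
      have h2 : ‖hH.eigenvectorBasis i‖ ^ 2 = v ⬝ᵥ v := by
        rw [EuclideanSpace.norm_eq, Real.sq_sqrt (by positivity)]
        simp [dotProduct, sq]
        rfl
      rw [hnorm] at h2; simpa using h2.symm
    have := hle v
    rw [hv, dotProduct_smul, hvv] at this
    simpa using this
  have hdet : P.det = ∏ i, μ i := by simpa using hH.det_eq_prod_eigenvalues
  have hprodle : ∀ j, P.det ≤ μ j := by
    intro j
    rw [hdet, ← Finset.mul_prod_erase Finset.univ μ (Finset.mem_univ j)]
    calc μ j * ∏ i ∈ Finset.univ.erase j, μ i ≤ μ j * 1 :=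
          mul_le_mul_of_nonneg_left
            (Finset.prod_le_one (fun i _ => h0 i) (fun i _ => h1 i)) (h0 j)
      _ = μ j := mul_one _
  refine ⟨by rw [hdet]; exact Finset.prod_le_one (fun i _ => h0 i) (fun i _ => h1 i), ?_⟩
  intro v
  have hspec := hH.spectral_theorem
  set U : Matrix n n ℝ := (hH.eigenvectorUnitary : Matrix n n ℝ) with hU
  have hUU : U * star U = 1 := (Matrix.mem_unitaryGroup_iff).mp hH.eigenvectorUnitary.2
  have hPsub : P - P.det • 1 = U * (Matrix.diagonal (fun i => μ i - P.det)) * star U := by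
    have h1' : (P.det • 1 : Matrix n n ℝ) = U * (P.det • 1) * star U := by
      rw [Matrix.mul_smul, Matrix.smul_mul, Matrix.mul_one, hUU]
    calc P - P.det • 1
        = U * Matrix.diagonal (RCLike.ofReal ∘ μ) * star U - U * (P.det • 1) * star U := by
          rw [← h1']; exact congrArg (fun Q => Q - P.det • 1) hspec
      _ = U * (Matrix.diagonal (RCLike.ofReal ∘ μ) - P.det • 1) * star U := by
          rw [← Matrix.sub_mul, ← Matrix.mul_sub]
      _ = U * (Matrix.diagonal (fun i => μ i - P.det)) * star U := by
          rw [Matrix.smul_one_eq_diagonal, Matrix.diagonal_sub]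
          norm_num
  have hpsd2 : (P - P.det • 1).PosSemidef := by
    rw [hPsub]
    have hd : (Matrix.diagonal (fun i => μ i - P.det)).PosSemidef :=
      Matrix.posSemidef_diagonal_iff.2 (fun i => by simpa using hprodle i)
    exact hd.mul_mul_conjTranspose_same U
  have := hpsd2.dotProduct_mulVec_nonneg v
  simp only [Matrix.sub_mulVec, dotProduct_sub, Matrix.smul_mulVec,
    Matrix.one_mulVec, dotProduct_smul, star_trivial, smul_eq_mul] at this
  linarith

lemma galantai_detT {k : ℕ} {m : Fin k → ℕ}
    (G : Matrix ((i : Fin k) × Fin (m i)) ((i : Fin k) × Fin (m i)) ℝ)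
    (hdiag : ∀ p q : (i : Fin k) × Fin (m i), p.1 = q.1 →
      G p q = if p = q then 1 else 0) :
    (Matrix.det (fun p q => if q.1 ≤ p.1 then G p q else 0)) = 1 := by
  set T : Matrix ((i : Fin k) × Fin (m i)) ((i : Fin k) × Fin (m i)) ℝ :=
    fun p q => if q.1 ≤ p.1 then G p q else 0 with hT
  have hbt : Tᵀ.BlockTriangular Sigma.fst := by
    intro p q hpq
    show T q p = 0
    rw [hT]
    simp only
    rw [if_neg (not_le.mpr hpq)]
  have hsq : ∀ a : Fin k, (Tᵀ.toSquareBlock Sigma.fst a) = 1 := by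
    intro a
    ext p q
    rcases p with ⟨p, hp⟩
    rcases q with ⟨q, hq⟩
    have hcond : p.1 ≤ q.1 := by rw [hp, hq]
    have hh : Tᵀ.toSquareBlock Sigma.fst a ⟨p, hp⟩ ⟨q, hq⟩ = T q p := rfl
    rw [hh, hT]
    simp only
    rw [if_pos hcond, hdiag q p (by rw [hp, hq])]
    by_cases h : p = q
    · subst h; simp [Matrix.one_apply]
    · rw [if_neg (fun hqp => h (hqp.symm)), Matrix.one_apply_ne
        (fun hc => h (Subtype.ext_iff.mp hc))]
  have hh : Tᵀ.det = 1 := by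
    rw [hbt.det]
    apply Finset.prod_eq_one
    intro a _
    rw [hsq a, Matrix.det_one]
  rw [← Matrix.det_transpose]
  exact hh

end GalantaiAux

/-- **Galantai.** Let `A : ℝ^{M×M}` be invertible, `x*` the solution of the
consistent system `A x = b`, and `B 1, …, B k` a row-partition of `A` into full-row-rank
blocks `B i : ℝ^{M_i×M}` with `∑ M_i = M` (encoded by the equivalence `e`). For each `i`
let `L i` be the lower-triangular Cholesky factor with `B i (B i)ᵀ = L i (L i)ᵀ`, set
`X_i = (B i)ᵀ (L i)^{−T}`, and let `X = [X_1, …, X_k]` be the concatenation (columns indexed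
by the disjoint union of the block row-index sets). Then for every `x 0` and every `q ≥ 1`,
the block Kaczmarz iterates satisfy
`‖x (qk) − x*‖² ≤ (1 − det (XᵀX))^q ‖x 0 − x*‖²`. -/
theorem galantai_block_kaczmarz_det_bound
    {M k : ℕ} (hk : 0 < k) (m : Fin k → ℕ)
    (A : Matrix (Fin M) (Fin M) ℝ) (hA : IsUnit A.det)
    (e : ((i : Fin k) × Fin (m i)) ≃ Fin M)
    (B : (i : Fin k) → Matrix (Fin (m i)) (Fin M) ℝ)
    (hB : ∀ (i : Fin k) (r : Fin (m i)), B i r = A (e ⟨i, r⟩))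
    (hrank : ∀ i, (B i).rank = m i)
    (L : (i : Fin k) → Matrix (Fin (m i)) (Fin (m i)) ℝ)
    (hlow : ∀ (i : Fin k) (r s : Fin (m i)), r < s → L i r s = 0)
    (hdiag : ∀ (i : Fin k) (r : Fin (m i)), 0 < L i r r)
    (hchol : ∀ i : Fin k, B i * (B i)ᵀ = L i * (L i)ᵀ)
    (X : Matrix (Fin M) ((i : Fin k) × Fin (m i)) ℝ)
    (hX : ∀ (rw : Fin M) (i : Fin k) (s : Fin (m i)),
      X rw ⟨i, s⟩ = ((B i)ᵀ * ((L i)ᵀ)⁻¹) rw s)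
    (b : Fin M → ℝ) (xstar : EuclideanSpace ℝ (Fin M))
    (hsol : A.mulVec xstar = b)
    (x : ℕ → EuclideanSpace ℝ (Fin M))
    (hx : ∀ (j : ℕ) (i : Fin k), (i : ℕ) = j % k →
      x (j + 1) = x j + (WithLp.equiv 2 (Fin M → ℝ)).symm
        ((B i)ᵀ.mulVec ((B i * (B i)ᵀ)⁻¹.mulVec
          ((fun r => b (e ⟨i, r⟩)) - (B i).mulVec (x j))))) :
    ∀ q : ℕ, 1 ≤ q →
      ‖x (q * k) - xstar‖ ^ 2 ≤ (1 - (Xᵀ * X).det) ^ q * ‖x 0 - xstar‖ ^ 2 := by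
  classical
  -- the orthonormalized blocks
  set Xi : (i : Fin k) → Matrix (Fin M) (Fin (m i)) ℝ :=
    fun i => (B i)ᵀ * ((L i)ᵀ)⁻¹ with hXidef
  have hXapp : ∀ (rw : Fin M) (i : Fin k) (s : Fin (m i)), X rw ⟨i, s⟩ = Xi i rw s := hX
  have hLdet : ∀ i, IsUnit (L i).det := by
    intro i
    have hbt : (L i)ᵀ.BlockTriangular id := fun p q h => hlow i q p h
    have h2 : (L i)ᵀ.det = ∏ r, L i r r := by
      rw [Matrix.det_of_upperTriangular hbt]; rfl
    rw [← Matrix.det_transpose, h2]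
    exact (Finset.prod_pos (fun r _ => hdiag i r)).ne'.isUnit
  have hLtdet : ∀ i, IsUnit ((L i)ᵀ).det := fun i => by
    rw [Matrix.det_transpose]; exact hLdet i
  have hXiXi : ∀ i, (Xi i)ᵀ * (Xi i) = 1 := by
    intro i
    rw [hXidef]
    simp only
    rw [Matrix.transpose_mul, Matrix.transpose_transpose]
    have h1 : ((L i)ᵀ)⁻¹ᵀ = (L i)⁻¹ := by
      rw [Matrix.transpose_nonsing_inv, Matrix.transpose_transpose]
    rw [h1]
    calc (L i)⁻¹ * B i * ((B i)ᵀ * ((L i)ᵀ)⁻¹)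
        = (L i)⁻¹ * (B i * (B i)ᵀ) * ((L i)ᵀ)⁻¹ := by
          rw [Matrix.mul_assoc, Matrix.mul_assoc, Matrix.mul_assoc]
      _ = (L i)⁻¹ * (L i * (L i)ᵀ) * ((L i)ᵀ)⁻¹ := by rw [hchol i]
      _ = ((L i)⁻¹ * L i) * ((L i)ᵀ * ((L i)ᵀ)⁻¹) := by
          rw [Matrix.mul_assoc, Matrix.mul_assoc, Matrix.mul_assoc]
      _ = 1 := by
          rw [Matrix.nonsing_inv_mul _ (hLdet i), Matrix.mul_nonsing_inv _ (hLtdet i),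
            Matrix.one_mul]
  have hproj : ∀ i, (B i)ᵀ * (B i * (B i)ᵀ)⁻¹ * (B i) = Xi i * (Xi i)ᵀ := by
    intro i
    rw [hXidef]
    simp only
    rw [Matrix.transpose_mul, Matrix.transpose_transpose]
    have h1 : ((L i)ᵀ)⁻¹ᵀ = (L i)⁻¹ := by
      rw [Matrix.transpose_nonsing_inv, Matrix.transpose_transpose]
    rw [h1, hchol i, Matrix.mul_inv_rev]
    rw [Matrix.mul_assoc, Matrix.mul_assoc, Matrix.mul_assoc]
  -- error vectors
  set εf : ℕ → Fin M → ℝ := fun j => (WithLp.equiv 2 (Fin M → ℝ)) (x j - xstar) with hεf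
  have hεapp : ∀ j c, εf j c = x j c - xstar c := fun j c => rfl
  have hnorm2 : ∀ j, ‖x j - xstar‖ ^ 2 = εf j ⬝ᵥ εf j := by
    intro j
    rw [EuclideanSpace.norm_eq, Real.sq_sqrt (by positivity)]
    simp [dotProduct, sq]
    rfl
  -- one Kaczmarz step
  have hstep : ∀ (j : ℕ) (i : Fin k), (i : ℕ) = j % k →
      εf (j+1) = εf j - (Xi i) *ᵥ ((Xi i)ᵀ *ᵥ (εf j)) := by
    intro j i hi
    have hxj := hx j i hi
    have hbv : ((fun r => b (e ⟨i, r⟩)) - (B i).mulVec (x j)) = (B i) *ᵥ (-(εf j)) := by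
      funext r
      rw [← hsol]
      simp only [Pi.sub_apply, Matrix.mulVec, dotProduct, Pi.neg_apply]
      rw [← hB i r]
      rw [← Finset.sum_sub_distrib]
      apply Finset.sum_congr rfl
      intro c _
      rw [hεapp j c]
      ring
    rw [hbv] at hxj
    funext c
    have hc : x (j+1) c = x j c + ((B i)ᵀ *ᵥ ((B i * (B i)ᵀ)⁻¹ *ᵥ ((B i) *ᵥ (-(εf j))))) c := by
      rw [hxj]; rfl
    have hm : ((B i)ᵀ *ᵥ ((B i * (B i)ᵀ)⁻¹ *ᵥ ((B i) *ᵥ (-(εf j)))))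
        = -((Xi i) *ᵥ ((Xi i)ᵀ *ᵥ (εf j))) := by
      rw [Matrix.mulVec_mulVec, Matrix.mulVec_mulVec, hproj i, Matrix.mulVec_neg,
        ← Matrix.mulVec_mulVec]
    rw [hm] at hc
    simp only [Pi.sub_apply]
    rw [hεapp (j+1) c, hc, hεapp j c]
    simp
    ring
  -- norm decrease in one step
  have hstepnorm : ∀ (j : ℕ) (i : Fin k), (i : ℕ) = j % k →
      εf (j+1) ⬝ᵥ εf (j+1) = εf j ⬝ᵥ εf j - ((Xi i)ᵀ *ᵥ εf j) ⬝ᵥ ((Xi i)ᵀ *ᵥ εf j) := by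
    intro j i hi
    rw [hstep j i hi]
    set u := εf j with hu
    set w := (Xi i)ᵀ *ᵥ u with hwd
    have h1 : u ⬝ᵥ ((Xi i) *ᵥ w) = w ⬝ᵥ w := by
      rw [Matrix.dotProduct_mulVec, ← Matrix.mulVec_transpose]
    have h2 : ((Xi i) *ᵥ w) ⬝ᵥ u = w ⬝ᵥ w := by rw [dotProduct_comm, h1]
    have h3 : ((Xi i) *ᵥ w) ⬝ᵥ ((Xi i) *ᵥ w) = w ⬝ᵥ w := by
      rw [Matrix.dotProduct_mulVec, ← Matrix.mulVec_transpose, Matrix.mulVec_mulVec,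
        hXiXi i, Matrix.one_mulVec]
    rw [dotProduct_sub, sub_dotProduct, sub_dotProduct, h1, h2, h3]
    ring
  -- the Gram matrix
  set G := Xᵀ * X with hG
  have hGapp : ∀ (i j : Fin k) (r : Fin (m i)) (s : Fin (m j)),
      G ⟨i, r⟩ ⟨j, s⟩ = ((Xi i)ᵀ * (Xi j)) r s := by
    intro i j r s
    rw [hG]
    simp only [Matrix.mul_apply, Matrix.transpose_apply]
    exact Finset.sum_congr rfl fun c _ => by rw [hXapp c i r, hXapp c j s]
  have hGdiagblock : ∀ (p q : (i : Fin k) × Fin (m i)), p.1 = q.1 →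
      G p q = if p = q then 1 else 0 := by
    rintro ⟨i, r⟩ ⟨j, s⟩ (h : i = j)
    subst h
    rw [hGapp i i r s, hXiXi i]
    by_cases h : r = s
    · subst h; simp [Matrix.one_apply]
    · rw [Matrix.one_apply_ne h, if_neg (by simp [h])]
  have hGsymm : Gᵀ = G := by
    rw [hG, Matrix.transpose_mul, Matrix.transpose_transpose]
  -- the block lower-triangular part of G
  set T : Matrix ((i : Fin k) × Fin (m i)) ((i : Fin k) × Fin (m i)) ℝ :=
    fun p q => if q.1 ≤ p.1 then G p q else 0 with hT
  have hGTT : G = T + Tᵀ - 1 := by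
    ext p q
    have hTpq : T p q = if q.1 ≤ p.1 then G p q else 0 := rfl
    have hTqp : Tᵀ p q = if p.1 ≤ q.1 then G q p else 0 := rfl
    simp only [Matrix.sub_apply, Matrix.add_apply, hTpq, hTqp]
    rcases lt_trichotomy p.1 q.1 with h | h | h
    · rw [if_neg (not_le.mpr h), if_pos h.le, Matrix.one_apply_ne
        (fun hc => absurd (congrArg Sigma.fst hc) h.ne), zero_add, sub_zero]
      conv_lhs => rw [← hGsymm]
      rfl
    · rw [if_pos h.ge, if_pos h.le]
      rw [hGdiagblock p q h, hGdiagblock q p h.symm]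
      by_cases hpq : p = q
      · subst hpq; simp [Matrix.one_apply]
      · rw [if_neg hpq, if_neg (fun hc => hpq hc.symm), Matrix.one_apply_ne hpq]
        ring
    · rw [if_pos h.le, if_neg (not_le.mpr h), Matrix.one_apply_ne
        (fun hc => absurd (congrArg Sigma.fst hc) h.ne'), add_zero, sub_zero]
  have hTdet : T.det = 1 := by
    rw [hT]; exact galantai_detT G hGdiagblock
  have hTunit : IsUnit T.det := by rw [hTdet]; exact isUnit_one
  -- the whitened matrix Z
  set Z : Matrix ((i : Fin k) × Fin (m i)) (Fin M) ℝ := T⁻¹ * Xᵀ with hZ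
  have hZt : Zᵀ = X * (T⁻¹)ᵀ := by rw [hZ, Matrix.transpose_mul, Matrix.transpose_transpose]
  have hZZG : Z * Zᵀ = T⁻¹ * G * (T⁻¹)ᵀ := by
    rw [hZt, hZ, hG, Matrix.mul_assoc, ← Matrix.mul_assoc (Xᵀ), ← Matrix.mul_assoc,
      ← Matrix.mul_assoc]
  have hZZt : Z * Zᵀ = 1 - (T⁻¹ - 1) * (T⁻¹ - 1)ᵀ := by
    have hST : T⁻¹ * T = 1 := Matrix.nonsing_inv_mul _ hTunit
    have hTS : Tᵀ * (T⁻¹)ᵀ = 1 := by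
      rw [← Matrix.transpose_mul, hST, Matrix.transpose_one]
    rw [hZZG, hGTT]
    rw [Matrix.mul_sub, Matrix.mul_add, Matrix.sub_mul, Matrix.add_mul, hST,
      Matrix.mul_one, Matrix.one_mul]
    rw [Matrix.mul_assoc, hTS, Matrix.mul_one]
    rw [Matrix.transpose_sub, Matrix.transpose_one, Matrix.sub_mul, Matrix.mul_sub,
      Matrix.mul_sub, Matrix.one_mul, Matrix.mul_one]
    simp only [Matrix.one_mul]
    abel
  -- Z is a contraction
  have hZcon : ∀ v : ((i : Fin k) × Fin (m i)) → ℝ,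
      (Zᵀ *ᵥ v) ⬝ᵥ (Zᵀ *ᵥ v) ≤ v ⬝ᵥ v := by
    intro v
    have h1 : (Zᵀ *ᵥ v) ⬝ᵥ (Zᵀ *ᵥ v) = v ⬝ᵥ ((Z * Zᵀ) *ᵥ v) :=
      (galantai_dp_mul_self Z v).symm
    rw [h1, hZZt, Matrix.sub_mulVec, dotProduct_sub, Matrix.one_mulVec]
    have h2 : 0 ≤ v ⬝ᵥ (((T⁻¹ - 1) * (T⁻¹ - 1)ᵀ) *ᵥ v) := by
      rw [galantai_dp_mul_self]
      exact galantai_dp_self_nonneg _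
    linarith
  have hZfor : ∀ v : Fin M → ℝ,
      v ⬝ᵥ ((Zᵀ * Z) *ᵥ v) = (Z *ᵥ v) ⬝ᵥ (Z *ᵥ v) := by
    intro v
    have := galantai_dp_mul_self Zᵀ v
    rwa [Matrix.transpose_transpose] at this
  -- ZᵀZ is positive semidefinite with quadratic form bounded by 1
  have hpsd : (Zᵀ * Z).PosSemidef := by
    have := Matrix.posSemidef_conjTranspose_mul_self Z
    rwa [Matrix.conjTranspose_eq_transpose_of_trivial] at this
  have hle : ∀ v : Fin M → ℝ, v ⬝ᵥ ((Zᵀ * Z) *ᵥ v) ≤ v ⬝ᵥ v := by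
    intro v
    rw [hZfor]
    exact galantai_lemZ Z hZcon v
  -- determinant identification
  have hdetZtZ : (Zᵀ * Z).det = G.det := by
    have h1 : (Zᵀ * Z).det = (Z * Zᵀ).det := by
      set W := Z.submatrix e.symm id with hW
      have h₁ : Zᵀ * Z = Wᵀ * W := by
        ext bb c
        simp only [mul_apply, transpose_apply, hW, submatrix_apply, id_eq]
        exact (Equiv.sum_comp e.symm (fun a => Z a bb * Z a c)).symm
      have h₂ : Z * Zᵀ = (W * Wᵀ).submatrix e e := by
        ext p q
        simp [mul_apply, hW]
      rw [h₁, h₂, Matrix.det_submatrix_equiv_self, Matrix.det_mul, Matrix.det_mul,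
        Matrix.det_transpose, mul_comm]
    rw [h1, hZZG, Matrix.det_mul, Matrix.det_mul, Matrix.det_transpose,
      Matrix.det_nonsing_inv, hTdet]
    simp
  obtain ⟨hd1, hkey⟩ := galantai_lemA hpsd hle
  rw [hdetZtZ] at hd1 hkey
  -- the sweep estimate
  have hsweep : ∀ N : ℕ, N % k = 0 →
      εf (N + k) ⬝ᵥ εf (N + k) ≤ (1 - G.det) * (εf N ⬝ᵥ εf N) := by
    intro N hN
    set v : (i : Fin k) → Fin (m i) → ℝ := fun i => (Xi i)ᵀ *ᵥ εf (N + i) with hv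
    set w : ((i : Fin k) × Fin (m i)) → ℝ := fun p => v p.1 p.2 with hw
    have hpartial : ∀ t, t ≤ k →
        (εf (N + t) = εf N -
          ∑ i ∈ Finset.univ.filter (fun i : Fin k => (i : ℕ) < t), Xi i *ᵥ v i) ∧
        (εf (N + t) ⬝ᵥ εf (N + t) = εf N ⬝ᵥ εf N -
          ∑ i ∈ Finset.univ.filter (fun i : Fin k => (i : ℕ) < t), v i ⬝ᵥ v i) := by
      intro t
      induction t with
      | zero => intro _; simp
      | succ t ih =>
        intro ht
        obtain ⟨ih1, ih2⟩ := ih (Nat.le_of_succ_le ht)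
        have htk : t < k := ht
        set it : Fin k := ⟨t, htk⟩ with hit
        have hmod : (it : ℕ) = (N + t) % k := by
          simp [hit, Nat.add_mod, hN, Nat.mod_eq_of_lt htk]
        have hvit : (Xi it)ᵀ *ᵥ εf (N + t) = v it := rfl
        have hfilter : Finset.univ.filter (fun i : Fin k => (i : ℕ) < t + 1)
            = insert it (Finset.univ.filter (fun i : Fin k => (i : ℕ) < t)) := by
          ext j
          simp only [Finset.mem_filter, Finset.mem_univ, true_and, Finset.mem_insert,
            Fin.ext_iff, hit]
          omega
        have hnotmem : it ∉ Finset.univ.filter (fun i : Fin k => (i : ℕ) < t) := by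
          simp [hit]
        have hs := hstep (N + t) it hmod
        have hsn := hstepnorm (N + t) it hmod
        constructor
        · show εf (N + t + 1) = _
          rw [hs, hfilter, Finset.sum_insert hnotmem, hvit, ih1]
          abel
        · show εf (N + t + 1) ⬝ᵥ εf (N + t + 1) = _
          rw [hsn, hfilter, Finset.sum_insert hnotmem, hvit, ih2]
          ring
    have hviT : ∀ i : Fin k, (Xi i)ᵀ *ᵥ εf N = v i +
        ∑ j ∈ Finset.univ.filter (fun j : Fin k => (j : ℕ) < (i : ℕ)),
          (((Xi i)ᵀ * Xi j) *ᵥ v j) := by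
      intro i
      have h1 := (hpartial i (le_of_lt i.isLt)).1
      have h2 : v i = (Xi i)ᵀ *ᵥ εf N -
          ∑ j ∈ Finset.univ.filter (fun j : Fin k => (j : ℕ) < (i : ℕ)),
            (((Xi i)ᵀ * Xi j) *ᵥ v j) := by
        rw [hv]
        simp only
        rw [h1, Matrix.mulVec_sub, galantai_mulVec_sum]
        congr 1
        apply Finset.sum_congr rfl
        intro j _
        rw [Matrix.mulVec_mulVec]
      rw [h2]; abel
    have hTw : T *ᵥ w = Xᵀ *ᵥ εf N := by
      funext p
      rcases p with ⟨i, r⟩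
      show ∑ q : (i : Fin k) × Fin (m i), T ⟨i, r⟩ q * w q = _
      rw [← Finset.univ_sigma_univ, Finset.sum_sigma]
      have hinner : ∀ j : Fin k, ∑ s : Fin (m j), T ⟨i, r⟩ ⟨j, s⟩ * w ⟨j, s⟩
          = if j ≤ i then (((Xi i)ᵀ * Xi j) *ᵥ v j) r else 0 := by
        intro j
        by_cases hj : j ≤ i
        · rw [if_pos hj]
          rw [Matrix.mulVec]
          apply Finset.sum_congr rfl
          intro s _
          rw [hT]
          simp only
          rw [if_pos (show (⟨j, s⟩ : (i : Fin k) × Fin (m i)).1 ≤ i from hj), hGapp]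
        · rw [if_neg hj]
          apply Finset.sum_eq_zero
          intro s _
          rw [hT]
          simp only
          rw [if_neg (show ¬((⟨j, s⟩ : (i : Fin k) × Fin (m i)).1 ≤ i) from hj), zero_mul]
      rw [Finset.sum_congr rfl fun j _ => hinner j]
      rw [← Finset.sum_filter]
      have hfilter2 : Finset.univ.filter (fun j : Fin k => j ≤ i)
          = insert i (Finset.univ.filter (fun j : Fin k => (j : ℕ) < (i : ℕ))) := by
        ext j
        simp only [Finset.mem_filter, Finset.mem_univ, true_and, Finset.mem_insert,
          Fin.ext_iff, Fin.le_def]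
        omega
      have hnm : i ∉ Finset.univ.filter (fun j : Fin k => (j : ℕ) < (i : ℕ)) := by simp
      rw [hfilter2, Finset.sum_insert hnm, hXiXi i, Matrix.one_mulVec]
      have hrhs : (Xᵀ *ᵥ εf N) ⟨i, r⟩ = ((Xi i)ᵀ *ᵥ εf N) r := by
        show ∑ c, Xᵀ ⟨i, r⟩ c * εf N c = _
        apply Finset.sum_congr rfl
        intro c _
        rw [Matrix.transpose_apply, hXapp c i r]
        rfl
      rw [hrhs, hviT i]
      simp [Finset.sum_apply]
    -- identify w with Z applied to the sweep-start error
    have hwZ : w = Z *ᵥ εf N := by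
      rw [hZ, ← Matrix.mulVec_mulVec, ← hTw, Matrix.mulVec_mulVec,
        Matrix.nonsing_inv_mul _ hTunit, Matrix.one_mulVec]
    have hwn : εf (N + k) ⬝ᵥ εf (N + k) = εf N ⬝ᵥ εf N - w ⬝ᵥ w := by
      have h2 := (hpartial k le_rfl).2
      have hfull : Finset.univ.filter (fun i : Fin k => (i : ℕ) < k) = Finset.univ := by
        ext j; simp [j.isLt]
      rw [h2, hfull]
      congr 1
      rw [hw, dotProduct, ← Finset.univ_sigma_univ, Finset.sum_sigma]
      apply Finset.sum_congr rfl
      intro j _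
      rfl
    have hlower : G.det * (εf N ⬝ᵥ εf N) ≤ w ⬝ᵥ w := by
      have := hkey (εf N)
      rw [hZfor (εf N)] at this
      rw [hwZ]
      exact this
    have he0 := galantai_dp_self_nonneg (εf N)
    rw [hwn]
    nlinarith
  -- main induction over sweeps
  have hd0 : 0 ≤ 1 - G.det := by linarith
  have main : ∀ q : ℕ, εf (q * k) ⬝ᵥ εf (q * k) ≤ (1 - G.det) ^ q * (εf 0 ⬝ᵥ εf 0) := by
    intro q
    induction q with
    | zero => simp
    | succ q ih =>
      have h1 : (q + 1) * k = q * k + k := by ring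
      have h2 := hsweep (q * k) (Nat.mul_mod_left q k)
      calc εf ((q + 1) * k) ⬝ᵥ εf ((q + 1) * k)
          = εf (q * k + k) ⬝ᵥ εf (q * k + k) := by rw [h1]
        _ ≤ (1 - G.det) * (εf (q * k) ⬝ᵥ εf (q * k)) := h2
        _ ≤ (1 - G.det) * ((1 - G.det) ^ q * (εf 0 ⬝ᵥ εf 0)) :=
            mul_le_mul_of_nonneg_left ih hd0
        _ = (1 - G.det) ^ (q + 1) * (εf 0 ⬝ᵥ εf 0) := by ring
  intro q _
  rw [hnorm2 (q * k), hnorm2 0]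
  exact main q
end

section
/- Let A ∈ ℝ^{M×M} be invertible with all rows having unit Euclidean norm, and let x* be the solution of the consistent system Ax = b. Then the simple cyclic Kaczmarz iterates (one row per step, cycling through all M rows) satisfy, for every integer q ≥ 1, ‖x_{qM} − x*‖₂² ≤ (1 − det(AAᵀ))^q ‖x_0 − x*‖₂². -/
open Matrix



lemma key_psd {n : ℕ} {T : Matrix (Fin n) (Fin n) ℝ} (hT : T.PosSemidef)
    (hT1 : (1 - T).PosSemidef) :
    (0 ≤ T.det ∧ T.det ≤ 1) ∧ (T - T.det • 1).PosSemidef := by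
  have hH : T.IsHermitian := hT.1
  set lam := hH.eigenvalues with hlam
  have hnn : ∀ i, 0 ≤ lam i := hT.eigenvalues_nonneg
  have hle1 : ∀ i, lam i ≤ 1 := by
    intro i
    set v : Fin n → ℝ := ⇑(hH.eigenvectorBasis i) with hv'
    have hv : T *ᵥ v = lam i • v := hH.mulVec_eigenvectorBasis i
    have hdot : v ⬝ᵥ v = 1 := by
      have h2 : @inner ℝ _ _ (hH.eigenvectorBasis i) (hH.eigenvectorBasis i) = (1:ℝ) := by
        rw [real_inner_self_eq_norm_sq, hH.eigenvectorBasis.orthonormal.1 i]; norm_num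
      rw [← h2, PiLp.inner_apply]
      simp [dotProduct, v, RCLike.inner_apply, pow_two]
    have h3 := hT1.dotProduct_mulVec_nonneg v
    rw [sub_mulVec, one_mulVec, dotProduct_sub, hv, star_trivial, dotProduct_smul] at h3
    rw [hdot] at h3
    simp only [smul_eq_mul, mul_one] at h3
    linarith
  have hdet : T.det = ∏ i, lam i := by
    have := hH.det_eq_prod_eigenvalues
    simpa using this
  have hd0 : 0 ≤ T.det := by
    rw [hdet]; exact Finset.prod_nonneg fun i _ => hnn i
  have hd1 : T.det ≤ 1 := by
    rw [hdet]; exact Finset.prod_le_one (fun i _ => hnn i) (fun i _ => hle1 i)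
  have hdlam : ∀ j, T.det ≤ lam j := by
    intro j
    rw [hdet, ← Finset.mul_prod_erase Finset.univ lam (Finset.mem_univ j)]
    calc lam j * ∏ i ∈ Finset.univ.erase j, lam i
        ≤ lam j * 1 := by
          apply mul_le_mul_of_nonneg_left _ (hnn j)
          exact Finset.prod_le_one (fun i _ => hnn i) (fun i _ => hle1 i)
      _ = lam j := mul_one _
  refine ⟨⟨hd0, hd1⟩, ?_⟩
  have hspec := hH.spectral_theorem
  simp only [Unitary.conjStarAlgAut_apply, Unitary.coe_star] at hspec
  set U : Matrix (Fin n) (Fin n) ℝ := (hH.eigenvectorUnitary : Matrix (Fin n) (Fin n) ℝ) with hU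
  have hUU : U * star U = 1 := (Matrix.mem_unitaryGroup_iff).mp hH.eigenvectorUnitary.2
  have hdiag : RCLike.ofReal ∘ lam = lam := by
    rw [RCLike.ofReal_real_eq_id]; rfl
  set d := T.det with hd
  have hTd : T - d • 1 = U * diagonal (fun i => lam i - d) * Uᴴ := by
    calc T - d • 1
        = U * diagonal (RCLike.ofReal ∘ lam) * star U - U * (d • 1) * star U := by
          rw [← hspec, Matrix.mul_smul, Matrix.smul_mul, mul_one, hUU]
      _ = U * (diagonal lam - d • 1) * star U := by
          rw [hdiag, Matrix.mul_sub, Matrix.sub_mul]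
      _ = U * diagonal (fun i => lam i - d) * Uᴴ := by
          rw [smul_one_eq_diagonal, diagonal_sub, Matrix.star_eq_conjTranspose]
  rw [hTd]
  exact (Matrix.PosSemidef.diagonal (fun i => sub_nonneg.2 (hdlam i))).mul_mul_conjTranspose_same U


lemma dot_mulVec_eq {n : ℕ} (C : Matrix (Fin n) (Fin n) ℝ) (x y : Fin n → ℝ) :
    x ⬝ᵥ (C *ᵥ y) = (Cᵀ *ᵥ x) ⬝ᵥ y := by
  rw [dotProduct_mulVec, mulVec_transpose]

lemma dot_self_nonneg {n : ℕ} (v : Fin n → ℝ) : 0 ≤ v ⬝ᵥ v :=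
  Finset.sum_nonneg fun i _ => mul_self_nonneg _

lemma dot_cauchy {n : ℕ} (v w : Fin n → ℝ) : (v ⬝ᵥ w) ^ 2 ≤ (v ⬝ᵥ v) * (w ⬝ᵥ w) := by
  have := Finset.sum_mul_sq_le_sq_mul_sq Finset.univ v w
  simpa [dotProduct, pow_two, Finset.mul_sum, Finset.sum_mul, mul_assoc, mul_comm, mul_left_comm]
    using this

lemma mulVec_sq_bound {n : ℕ} (C : Matrix (Fin n) (Fin n) ℝ)
    (h : (1 - C * Cᵀ).PosSemidef) :
    (0 ≤ C.det ^ 2 ∧ C.det ^ 2 ≤ 1) ∧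
      ∀ x : Fin n → ℝ, C.det ^ 2 * (x ⬝ᵥ x) ≤ (C *ᵥ x) ⬝ᵥ (C *ᵥ x) := by
  have claimA : ∀ y : Fin n → ℝ, (Cᵀ *ᵥ y) ⬝ᵥ (Cᵀ *ᵥ y) ≤ y ⬝ᵥ y := by
    intro y
    have h2 := h.dotProduct_mulVec_nonneg y
    rw [star_trivial, sub_mulVec, one_mulVec, dotProduct_sub, ← mulVec_mulVec,
      dot_mulVec_eq] at h2
    linarith
  have claimB : ∀ x : Fin n → ℝ, (C *ᵥ x) ⬝ᵥ (C *ᵥ x) ≤ x ⬝ᵥ x := by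
    intro x
    set u := C *ᵥ x with hu
    have h1 : u ⬝ᵥ u = (Cᵀ *ᵥ u) ⬝ᵥ x := by
      rw [hu]; rw [← dot_mulVec_eq]
    have h2 : ((Cᵀ *ᵥ u) ⬝ᵥ x) ^ 2 ≤ (u ⬝ᵥ u) * (x ⬝ᵥ x) :=
      le_trans (dot_cauchy _ _)
        (mul_le_mul_of_nonneg_right (claimA u) (dot_self_nonneg x))
    nlinarith [dot_self_nonneg u, dot_self_nonneg x]
  set T := Cᵀ * C with hT
  have hTps : T.PosSemidef := by
    have := posSemidef_conjTranspose_mul_self C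
    simpa [conjTranspose_eq_transpose_of_trivial] using this
  have hquad : ∀ x : Fin n → ℝ, x ⬝ᵥ (T *ᵥ x) = (C *ᵥ x) ⬝ᵥ (C *ᵥ x) := by
    intro x
    rw [hT, ← mulVec_mulVec, dot_mulVec_eq, transpose_transpose]
  have hT1 : (1 - T).PosSemidef := by
    refine PosSemidef.of_dotProduct_mulVec_nonneg ?_ ?_
    · have : (1 - T)ᴴ = 1 - T := by
        rw [conjTranspose_sub, conjTranspose_one, hTps.1.eq]
      exact this
    · intro x
      rw [star_trivial, sub_mulVec, one_mulVec, dotProduct_sub, hquad]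
      have := claimB x
      linarith
  obtain ⟨⟨hd0, hd1⟩, hpsd⟩ := key_psd hTps hT1
  have hdet : T.det = C.det ^ 2 := by
    rw [hT, det_mul, det_transpose, pow_two]
  rw [hdet] at hd0 hd1 hpsd
  refine ⟨⟨hd0, hd1⟩, fun x => ?_⟩
  have h3 := hpsd.dotProduct_mulVec_nonneg x
  rw [star_trivial, sub_mulVec, dotProduct_sub, hquad, smul_mulVec, one_mulVec,
    dotProduct_smul] at h3
  simp only [smul_eq_mul] at h3
  linarith

/-- Let `A : ℝ^{M×M}` be invertible with all rows of unit Euclidean norm,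
and let `x*` be the solution of the consistent system `A x = b`. Then the simple cyclic
Kaczmarz iterates `x_{j+1} = x_j + ((b_i − ⟨a_i, x_j⟩)/‖a_i‖²) a_i`, `i = j mod M`, satisfy
`‖x (qM) − x*‖² ≤ (1 − det (A Aᵀ))^q ‖x 0 − x*‖²` for every `q ≥ 1`. -/
theorem simple_kaczmarz_det_bound
    {M : ℕ} (hM : 0 < M)
    (A : Matrix (Fin M) (Fin M) ℝ) (hA : IsUnit A.det)
    (hrows : ∀ i, ∑ j, A i j ^ 2 = 1)
    (b : Fin M → ℝ) (xstar : EuclideanSpace ℝ (Fin M))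
    (hsol : A.mulVec xstar = b)
    (x : ℕ → EuclideanSpace ℝ (Fin M))
    (hx : ∀ (j : ℕ) (i : Fin M), (i : ℕ) = j % M →
      x (j + 1) = x j + ((b i - ∑ c, A i c * x j c) / ∑ c, A i c ^ 2) •
        (WithLp.equiv 2 (Fin M → ℝ)).symm (A i)) :
    ∀ q : ℕ, 1 ≤ q →
      ‖x (q * M) - xstar‖ ^ 2 ≤ (1 - (A * Aᵀ).det) ^ q * ‖x 0 - xstar‖ ^ 2 := by
  classical
  set d := (A * Aᵀ).det with hdd
  set G := A * Aᵀ with hG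
  have hGapp : ∀ k j, G k j = ∑ t, A k t * A j t := by
    intro k j; rw [hG, mul_apply]; simp [transpose_apply]
  have hGsymm : ∀ k j, G j k = G k j := by
    intro k j; rw [hGapp, hGapp]; simp [mul_comm]
  have hAA : ∀ i : Fin M, ∑ t, A i t * A i t = 1 := by
    intro i; simpa [pow_two] using hrows i
  have hGdiag : ∀ k, G k k = 1 := by intro k; rw [hGapp]; exact hAA k
  set L : Matrix (Fin M) (Fin M) ℝ := Matrix.of fun k j => if j ≤ k then G k j else 0 with hL
  have hLtri : L.BlockTriangular OrderDual.toDual := by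
    intro i j hij
    have : ¬ (j ≤ i) := not_le.2 hij
    simp [hL, this]
  have hLdet : L.det = 1 := by
    rw [Matrix.det_of_lowerTriangular L hLtri]
    simp [hL, hGdiag]
  have hLunit : IsUnit L.det := by rw [hLdet]; exact isUnit_one
  have hLinv : L⁻¹ * L = 1 := nonsing_inv_mul L hLunit
  have hLinv2 : L * L⁻¹ = 1 := mul_nonsing_inv L hLunit
  have hGLL : G = L + Lᵀ - 1 := by
    ext k j
    simp only [Matrix.add_apply, Matrix.sub_apply, one_apply, transpose_apply, hL, of_apply]
    rcases lt_trichotomy (j : Fin M) k with h | h | h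
    · have h1 : j ≤ k := le_of_lt h
      have h2 : ¬ (k ≤ j) := not_le.2 h
      have h3 : k ≠ j := fun e => h2 (le_of_eq e)
      simp [h1, h2, h3]
    · subst h
      simp [hGdiag]
    · have h1 : ¬ (j ≤ k) := not_le.2 h
      have h2 : k ≤ j := le_of_lt h
      have h3 : k ≠ j := ne_of_lt h
      simp [h1, h2, h3, hGsymm k j]
  set C := L⁻¹ * A with hC
  have hCdet : C.det ^ 2 = d := by
    have h1 : C.det = L⁻¹.det * A.det := det_mul _ _
    have h2 : L⁻¹.det = 1 := by rw [det_nonsing_inv, hLdet]; simp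
    rw [h1, h2, one_mul, pow_two, hdd, hG, det_mul, det_transpose]
  have hCC : 1 - C * Cᵀ = (1 - L⁻¹) * (1 - L⁻¹)ᵀ := by
    have e2 : Lᵀ * L⁻¹ᵀ = 1 := by rw [← transpose_mul, hLinv, transpose_one]
    have h1 : C * Cᵀ = L⁻¹ * G * L⁻¹ᵀ := by
      rw [hC, transpose_mul, hG]
      simp only [Matrix.mul_assoc]
    have expand : L⁻¹ * (L + Lᵀ - 1) * L⁻¹ᵀ
        = (L⁻¹ * L) * L⁻¹ᵀ + L⁻¹ * (Lᵀ * L⁻¹ᵀ) - L⁻¹ * L⁻¹ᵀ := by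
      noncomm_ring
    rw [h1, hGLL, expand, hLinv, e2, one_mul, mul_one, transpose_sub, transpose_one]
    noncomm_ring
  have hPSD : (1 - C * Cᵀ).PosSemidef := by
    rw [hCC]
    have := posSemidef_self_mul_conjTranspose (1 - L⁻¹)
    simpa [conjTranspose_eq_transpose_of_trivial] using this
  obtain ⟨⟨hd0', hd1'⟩, hbound⟩ := mulVec_sq_bound C hPSD
  rw [hCdet] at hd0' hd1' hbound
  have hb : ∀ i, b i = ∑ t, A i t * xstar t := by
    intro i; rw [← hsol]; rfl
  have hsweep : ∀ p : ℕ,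
      (∑ t, (x ((p+1)*M) t - xstar t) * (x ((p+1)*M) t - xstar t))
        ≤ (1-d) * ∑ t, (x (p*M) t - xstar t) * (x (p*M) t - xstar t) := by
    intro p
    set e : ℕ → Fin M → ℝ := fun k t => x (p*M + k) t - xstar t with he
    set c : Fin M → ℝ := fun i => ∑ t, A i t * e (i : ℕ) t with hc
    have hstep : ∀ (k : ℕ) (hk : k < M) (t : Fin M),
        e (k+1) t = e k t - c ⟨k, hk⟩ * A ⟨k, hk⟩ t := by
      intro k hk t
      have hmod : ((⟨k, hk⟩ : Fin M) : ℕ) = (p*M + k) % M := by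
        simp only [Fin.val_mk]
        rw [Nat.add_comm, Nat.add_mul_mod_self_right, Nat.mod_eq_of_lt hk]
      have h1 := hx (p*M+k) ⟨k,hk⟩ hmod
      have h2 : x (p*M+k+1) t = x (p*M+k) t
          + ((b ⟨k,hk⟩ - ∑ s, A ⟨k,hk⟩ s * x (p*M+k) s) / ∑ s, A ⟨k,hk⟩ s ^ 2) * A ⟨k,hk⟩ t := by
        rw [h1]
        simp [PiLp.add_apply, PiLp.smul_apply, WithLp.equiv_symm_apply]
      have h3 : e (k+1) t = x (p*M+k+1) t - xstar t := rfl
      have h4 : c ⟨k,hk⟩ = ∑ s, A ⟨k,hk⟩ s * (x (p*M+k) s - xstar s) := rfl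
      have h5 : e k t = x (p*M+k) t - xstar t := rfl
      rw [h3, h2, h5, h4, hrows, div_one, hb]
      simp only [mul_sub, Finset.sum_sub_distrib]
      ring
    have hsplit : ∀ (f : Fin M → ℝ) (k : ℕ) (hk' : k < M) (i : Fin M),
        (if (i:ℕ) < k+1 then f i else 0)
          = (if (i:ℕ) < k then f i else 0) + (if i = ⟨k,hk'⟩ then f i else 0) := by
      intro f k hk' i
      rcases lt_trichotomy (i:ℕ) k with h | h | h
      · have h2 : (i:ℕ) ≠ k := Nat.ne_of_lt h
        simp [h, Nat.lt_succ_of_lt h, Fin.ext_iff, h2]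
      · simp [h, Fin.ext_iff, Nat.lt_irrefl, Nat.lt_succ_self]
      · have h1 : ¬ ((i:ℕ) < k+1) := by omega
        have h2 : ¬ ((i:ℕ) < k) := by omega
        have h3 : (i:ℕ) ≠ k := by omega
        simp [h1, h2, Fin.ext_iff, h3]
    have hrep : ∀ k, k ≤ M → ∀ t, e k t
        = e 0 t - ∑ i : Fin M, (if (i:ℕ) < k then c i * A i t else 0) := by
      intro k
      induction k with
      | zero => intro _ t; simp
      | succ k ih =>
        intro hk t
        have hk' : k < M := hk
        rw [hstep k hk' t, ih (le_of_lt hk') t]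
        rw [Finset.sum_congr rfl (fun i _ => hsplit (fun i => c i * A i t) k hk' i),
          Finset.sum_add_distrib, Finset.sum_ite_eq' Finset.univ (⟨k,hk'⟩ : Fin M)]
        simp only [Finset.mem_univ, if_pos]
        ring
    have hnorm : ∀ k, k ≤ M → (∑ t, e k t * e k t)
        = (∑ t, e 0 t * e 0 t) - ∑ i : Fin M, (if (i:ℕ) < k then c i * c i else 0) := by
      intro k
      induction k with
      | zero => intro _; simp
      | succ k ih =>
        intro hk
        have hk' : k < M := hk
        have hstep2 : (∑ t, e (k+1) t * e (k+1) t)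
            = (∑ t, e k t * e k t) - c ⟨k,hk'⟩ * c ⟨k,hk'⟩ := by
          have hexp : ∀ t : Fin M, e (k+1) t * e (k+1) t
              = e k t * e k t - 2 * c ⟨k,hk'⟩ * (A ⟨k,hk'⟩ t * e k t)
                + (c ⟨k,hk'⟩ * c ⟨k,hk'⟩) * (A ⟨k,hk'⟩ t * A ⟨k,hk'⟩ t) := by
            intro t; rw [hstep k hk' t]; ring
          rw [Finset.sum_congr rfl (fun t _ => hexp t), Finset.sum_add_distrib,
            Finset.sum_sub_distrib, ← Finset.mul_sum, ← Finset.mul_sum, hAA]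
          have hcc : (∑ t, A ⟨k,hk'⟩ t * e k t) = c ⟨k,hk'⟩ := rfl
          rw [hcc]; ring
        rw [hstep2, ih (le_of_lt hk')]
        rw [Finset.sum_congr rfl (fun i _ => hsplit (fun i => c i * c i) k hk' i),
          Finset.sum_add_distrib, Finset.sum_ite_eq' Finset.univ (⟨k,hk'⟩ : Fin M)]
        simp only [Finset.mem_univ, if_pos]
        ring
    have hck : ∀ k : Fin M, c k + (∑ j : Fin M, if (j:ℕ) < (k:ℕ) then c j * G k j else 0)
        = ∑ t, A k t * e 0 t := by
      intro k
      have h0 : c k = ∑ t, A k t * e (k:ℕ) t := rfl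
      rw [h0, Finset.sum_congr rfl (fun t _ => by rw [hrep (k:ℕ) (le_of_lt k.2) t])]
      simp only [mul_sub, Finset.sum_sub_distrib, Finset.mul_sum]
      rw [Finset.sum_comm]
      have hswap : ∀ j : Fin M, (∑ t, A k t * (if (j:ℕ) < (k:ℕ) then c j * A j t else 0))
          = (if (j:ℕ) < (k:ℕ) then c j * G k j else 0) := by
        intro j
        split_ifs with h
        · rw [hGapp, Finset.mul_sum]
          exact Finset.sum_congr rfl fun t _ => by ring
        · simp
      rw [Finset.sum_congr rfl (fun j _ => hswap j)]
      ring
    have hLc : L *ᵥ c = A *ᵥ (e 0) := by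
      funext k
      have hLk : (L *ᵥ c) k = ∑ j : Fin M, (if j ≤ k then G k j * c j else 0) := by
        simp [mulVec, dotProduct, hL, ite_mul]
      have hsplit2 : ∀ j : Fin M, (if j ≤ k then G k j * c j else 0)
          = (if (j:ℕ) < (k:ℕ) then c j * G k j else 0) + (if j = k then G k j * c j else 0) := by
        intro j
        rcases lt_trichotomy j k with h | h | h
        · have h1 : j ≤ k := le_of_lt h
          have h2 : (j:ℕ) < (k:ℕ) := h
          have h3 : j ≠ k := ne_of_lt h
          simp [h1, h2, h3, mul_comm]
        · subst h
          simp [Nat.lt_irrefl]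
        · have h1 : ¬ (j ≤ k) := not_le.2 h
          have h2 : ¬ ((j:ℕ) < (k:ℕ)) := not_lt.2 (le_of_lt h)
          have h3 : j ≠ k := (ne_of_lt h).symm
          simp [h1, h2, h3]
      rw [hLk, Finset.sum_congr rfl (fun j _ => hsplit2 j), Finset.sum_add_distrib,
        Finset.sum_ite_eq' Finset.univ k]
      simp only [Finset.mem_univ, if_pos, hGdiag, one_mul]
      have hAk : (A *ᵥ (e 0)) k = ∑ t, A k t * e 0 t := rfl
      rw [hAk]
      have := hck k
      linarith
    have hceq : c = C *ᵥ (e 0) := by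
      rw [hC, ← mulVec_mulVec, ← hLc, mulVec_mulVec, hLinv, one_mulVec]
    have hlow := hbound (e 0)
    have hsumc : (∑ i, c i * c i) = (C *ᵥ (e 0)) ⬝ᵥ (C *ᵥ (e 0)) := by
      rw [← hceq]; rfl
    have hdot0 : (e 0) ⬝ᵥ (e 0) = ∑ t, e 0 t * e 0 t := rfl
    have hfinal := hnorm M le_rfl
    have hallc : (∑ i : Fin M, if (i:ℕ) < M then c i * c i else 0) = ∑ i, c i * c i :=
      Finset.sum_congr rfl fun i _ => if_pos i.2
    rw [hallc] at hfinal
    have hPM : (p+1)*M = p*M + M := by ring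
    have hgoalL : (∑ t, (x ((p+1)*M) t - xstar t) * (x ((p+1)*M) t - xstar t))
        = ∑ t, e M t * e M t := by rw [hPM]
    have hgoalR : (∑ t, (x (p*M) t - xstar t) * (x (p*M) t - xstar t))
        = ∑ t, e 0 t * e 0 t := rfl
    rw [hgoalL, hgoalR, hfinal]
    rw [hsumc] at hfinal ⊢
    rw [hdot0] at hlow
    nlinarith [hlow]
  have hnormsq : ∀ v : EuclideanSpace ℝ (Fin M), ‖v‖^2 = ∑ t, v t * v t := by
    intro v
    rw [EuclideanSpace.norm_eq, Real.sq_sqrt (Finset.sum_nonneg fun t _ => sq_nonneg _)]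
    exact Finset.sum_congr rfl fun t _ => by rw [Real.norm_eq_abs, sq_abs, pow_two]
  have hsub : ∀ (j : ℕ) (t : Fin M), (x j - xstar) t = x j t - xstar t := fun j t => rfl
  have main : ∀ q : ℕ, ‖x (q*M) - xstar‖^2 ≤ (1-d)^q * ‖x 0 - xstar‖^2 := by
    intro q
    induction q with
    | zero => simp
    | succ q ih =>
      have h2 := hsweep q
      have e1 : ‖x ((q+1)*M) - xstar‖^2
          = ∑ t, (x ((q+1)*M) t - xstar t) * (x ((q+1)*M) t - xstar t) := by
        rw [hnormsq]
        exact Finset.sum_congr rfl fun t _ => rfl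
      have e2 : ‖x (q*M) - xstar‖^2
          = ∑ t, (x (q*M) t - xstar t) * (x (q*M) t - xstar t) := by
        rw [hnormsq]
        exact Finset.sum_congr rfl fun t _ => rfl
      have h1d : (0:ℝ) ≤ 1 - d := by linarith
      calc ‖x ((q+1)*M) - xstar‖^2
          = ∑ t, (x ((q+1)*M) t - xstar t) * (x ((q+1)*M) t - xstar t) := e1
        _ ≤ (1-d) * ∑ t, (x (q*M) t - xstar t) * (x (q*M) t - xstar t) := h2
        _ = (1-d) * ‖x (q*M) - xstar‖^2 := by rw [e2]
        _ ≤ (1-d) * ((1-d)^q * ‖x 0 - xstar‖^2) := mul_le_mul_of_nonneg_left ih h1d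
        _ = (1-d)^(q+1) * ‖x 0 - xstar‖^2 := by ring
  intro q _
  exact main q
end

section
/- (Strohmer–Vershynin, one step) Let A ∈ ℝ^{M×N} have full column rank with nonzero rows a_1, …, a_M, let ‖A‖_F be its Frobenius norm and σ_min(A) its smallest singular value. For a randomized Kaczmarz step that selects row i with probability p_i = ‖a_i‖₂²/‖A‖_F² and replaces the current error e ∈ ℝ^N by (I − P_i)e, where P_i is the orthogonal projection onto span(a_i), the expected squared error after one step satisfies ∑_{i=1}^{M} p_i ‖(I − P_i)e‖₂² ≤ (1 − σ_min(A)²/‖A‖_F²) ‖e‖₂² = (1 − κ(A)^{−2}) ‖e‖₂². -/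
open Matrix

private lemma euclid_norm_sq {n : ℕ} (v : EuclideanSpace ℝ (Fin n)) :
    ‖v‖ ^ 2 = ∑ j, v j ^ 2 := by
  rw [EuclideanSpace.norm_eq, Real.sq_sqrt (by positivity)]
  simp [Real.norm_eq_abs, sq_abs]

/-- **Strohmer–Vershynin, one step.** Let `A : ℝ^{M×N}` have full column rank
with nonzero rows, let `∑ i j, A i j ^ 2` be its squared Frobenius norm and `σ` its smallest
singular value (the infimum of `‖A x‖` over the Euclidean unit sphere). For a randomized
Kaczmarz step selecting row `i` with probability `p i = ‖a_i‖² / ‖A‖_F²` and replacing the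
current error `e` by `(I − P_i) e`, where `P_i` is the orthogonal projection onto
`span (a_i)`, the expected squared error after one step satisfies
`∑ i, p i ‖(I − P_i) e‖² ≤ (1 − σ² / ‖A‖_F²) ‖e‖² = (1 − κ(A)⁻²) ‖e‖²`. -/
theorem randomized_kaczmarz_one_step_expected_error
    {M N : ℕ}
    (A : Matrix (Fin M) (Fin N) ℝ) (hrank : A.rank = N)
    (hrows : ∀ i, A i ≠ 0)
    (σ : ℝ)
    (hσ : σ = sInf ((fun x : EuclideanSpace ℝ (Fin N) =>
      ‖(WithLp.equiv 2 (Fin M → ℝ)).symm (A.mulVec x)‖) '' {x | ‖x‖ = 1}))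
    (p : Fin M → ℝ)
    (hp : ∀ i, p i = (∑ j, A i j ^ 2) / (∑ i, ∑ j, A i j ^ 2))
    (P : Fin M → EuclideanSpace ℝ (Fin N) → EuclideanSpace ℝ (Fin N))
    (hP : ∀ (i : Fin M) (v : EuclideanSpace ℝ (Fin N)),
      P i v = ((∑ j, A i j * v j) / ∑ j, A i j ^ 2) • (WithLp.equiv 2 (Fin N → ℝ)).symm (A i))
    (e : EuclideanSpace ℝ (Fin N)) :
    ∑ i, p i * ‖e - P i e‖ ^ 2 ≤ (1 - σ ^ 2 / ∑ i, ∑ j, A i j ^ 2) * ‖e‖ ^ 2 := by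
  classical
  by_cases hM : M = 0
  · subst hM
    simp only [Finset.univ_eq_empty, Finset.sum_empty, div_zero, sub_zero, one_mul]
    positivity
  set F : ℝ := ∑ i, ∑ j, A i j ^ 2 with hF
  set r : Fin M → ℝ := fun i => ∑ j, A i j ^ 2 with hr
  set s : Fin M → ℝ := fun i => ∑ j, A i j * e j with hs
  have hrpos : ∀ i, 0 < r i := by
    intro i
    obtain ⟨j, hj⟩ := Function.ne_iff.mp (hrows i)
    exact Finset.sum_pos' (fun k _ => sq_nonneg _)
      ⟨j, Finset.mem_univ j, lt_of_le_of_ne (sq_nonneg _) (Ne.symm (pow_ne_zero 2 hj))⟩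
  have hFpos : 0 < F := by
    have : Nonempty (Fin M) := ⟨⟨0, Nat.pos_of_ne_zero hM⟩⟩
    exact Finset.sum_pos (fun i _ => hrpos i) Finset.univ_nonempty
  -- Pythagoras for one step
  have step : ∀ i, ‖e - P i e‖ ^ 2 = ‖e‖ ^ 2 - s i ^ 2 / r i := by
    intro i
    have hcoord : ∀ j, (e - P i e) j = e j - (s i / r i) * A i j := by
      intro j
      rw [hP]
      simp
      exact Or.inl rfl
    have h1 : ∑ j, (e - P i e) j ^ 2
        = ∑ j, (e j ^ 2 - 2 * (s i / r i) * (A i j * e j) + (s i / r i) ^ 2 * A i j ^ 2) :=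
      Finset.sum_congr rfl (fun j _ => by rw [hcoord j]; ring)
    have hss : (∑ j, A i j * e j) = s i := rfl
    have hrr : (∑ j, A i j ^ 2) = r i := rfl
    rw [euclid_norm_sq, h1, Finset.sum_add_distrib, Finset.sum_sub_distrib,
      ← Finset.mul_sum, ← Finset.mul_sum, hss, hrr, euclid_norm_sq]
    have := (hrpos i).ne'
    field_simp
    ring
  have lhs_eq : ∑ i, p i * ‖e - P i e‖ ^ 2 = ‖e‖ ^ 2 - (∑ i, s i ^ 2) / F := by
    have : ∀ i, p i * ‖e - P i e‖ ^ 2 = (r i / F) * ‖e‖ ^ 2 - s i ^ 2 / F := by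
      intro i
      rw [step i, hp i, show (∑ j, A i j ^ 2) = r i from rfl]
      have := (hrpos i).ne'
      field_simp
    rw [Finset.sum_congr rfl (fun i _ => this i), Finset.sum_sub_distrib,
      ← Finset.sum_mul, ← Finset.sum_div, ← Finset.sum_div]
    rw [show (∑ i, r i) = F from rfl, div_self hFpos.ne', one_mul]
  -- key: σ^2 * ‖e‖^2 ≤ ∑ i, s i ^ 2
  have hSnn : 0 ≤ ∑ i, s i ^ 2 := by positivity
  have hσnn : 0 ≤ σ := by
    rw [hσ]
    apply Real.sInf_nonneg
    rintro x ⟨y, -, rfl⟩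
    positivity
  have key : σ ^ 2 * ‖e‖ ^ 2 ≤ ∑ i, s i ^ 2 := by
    by_cases he : e = 0
    · simp [he]; exact hSnn
    · have hne : ‖e‖ ≠ 0 := norm_ne_zero_iff.mpr he
      set u : EuclideanSpace ℝ (Fin N) := ‖e‖⁻¹ • e with hu
      have hun : ‖u‖ = 1 := by
        rw [hu, norm_smul, norm_inv, norm_norm, inv_mul_cancel₀ hne]
      have hmem : ‖(WithLp.equiv 2 (Fin M → ℝ)).symm (A.mulVec u)‖ ∈
          ((fun x : EuclideanSpace ℝ (Fin N) =>
            ‖(WithLp.equiv 2 (Fin M → ℝ)).symm (A.mulVec x)‖) '' {x | ‖x‖ = 1}) :=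
        ⟨u, hun, rfl⟩
      have hbdd : BddBelow ((fun x : EuclideanSpace ℝ (Fin N) =>
          ‖(WithLp.equiv 2 (Fin M → ℝ)).symm (A.mulVec x)‖) '' {x | ‖x‖ = 1}) :=
        ⟨0, by rintro y ⟨x, -, rfl⟩; positivity⟩
      have hle : σ ≤ ‖(WithLp.equiv 2 (Fin M → ℝ)).symm (A.mulVec u)‖ := by
        rw [hσ]; exact csInf_le hbdd hmem
      have hval : ‖(WithLp.equiv 2 (Fin M → ℝ)).symm (A.mulVec u)‖ ^ 2
          = ‖e‖⁻¹ ^ 2 * ∑ i, s i ^ 2 := by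
        rw [euclid_norm_sq, Finset.mul_sum]
        apply Finset.sum_congr rfl
        intro i _
        have : (WithLp.equiv 2 (Fin M → ℝ)).symm (A.mulVec u) i = A.mulVec u i := rfl
        rw [this]
        have hmv : A.mulVec u i = ‖e‖⁻¹ * s i := by
          simp only [mulVec, dotProduct, hs]
          rw [Finset.mul_sum]
          apply Finset.sum_congr rfl
          intro j _
          have : u j = ‖e‖⁻¹ * e j := rfl
          rw [this]; ring
        rw [hmv]; ring
      have hsq : σ ^ 2 ≤ ‖e‖⁻¹ ^ 2 * ∑ i, s i ^ 2 := by
        calc σ ^ 2 ≤ ‖(WithLp.equiv 2 (Fin M → ℝ)).symm (A.mulVec u)‖ ^ 2 :=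
              pow_le_pow_left₀ hσnn hle 2
          _ = _ := hval
      have hnpos : (0:ℝ) < ‖e‖ ^ 2 := by positivity
      calc σ ^ 2 * ‖e‖ ^ 2 ≤ (‖e‖⁻¹ ^ 2 * ∑ i, s i ^ 2) * ‖e‖ ^ 2 := by
            exact mul_le_mul_of_nonneg_right hsq hnpos.le
        _ = ∑ i, s i ^ 2 := by field_simp
  rw [lhs_eq, sub_mul, one_mul, div_mul_eq_mul_div]
  have h2 : σ ^ 2 * ‖e‖ ^ 2 / F ≤ (∑ i, s i ^ 2) / F := by gcongr
  linarith
end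

section
/- Let A ∈ ℝ^{M×N} have full column rank with nonzero rows a_1, …, a_M, and let p_1, …, p_M be any probability distribution with p_i > 0 for all i. Define B ∈ ℝ^{M×N} as the matrix whose i‑th row is √p_i · a_i/‖a_i‖₂ (so ‖B‖_F = 1 and B has full column rank). Then for every e ∈ ℝ^N, the one‑step expected squared error of the randomized Kaczmarz iteration that selects row i with probability p_i satisfies ∑_{i=1}^{M} p_i ‖(I − P_i)e‖₂² ≤ (1 − κ(B)^{−2}) ‖e‖₂², where P_i is the orthogonal projection onto span(a_i) and κ(B) = ‖B‖_F ‖B^†‖₂. Hence randomized Kaczmarz with an arbitrary row‑selection distribution converges in expectation at the rate governed by the scaled condition number of a row‑rescaling B of A. -/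
open Matrix RealInnerProductSpace

private lemma eucl_norm_sq {n : ℕ} (x : EuclideanSpace ℝ (Fin n)) :
    ‖x‖ ^ 2 = ∑ i, x i ^ 2 := by
  rw [EuclideanSpace.norm_eq, Real.sq_sqrt (by positivity)]
  simp [sq_abs]

/-- Let `A : ℝ^{M×N}` have full column rank with nonzero rows, and let
`p` be any probability distribution on the rows with `p i > 0` for all `i`. Let
`B : ℝ^{M×N}` have `i`-th row `√(p i) · a_i / ‖a_i‖`, and let `σ` be the smallest singular
value of `B`. Then for every `e ∈ ℝ^N`, the one-step expected squared error of the
randomized Kaczmarz iteration selecting row `i` with probability `p i` satisfies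
`∑ i, p i ‖(I − P_i) e‖² ≤ (1 − κ(B)⁻²) ‖e‖² = (1 − σ² / ‖B‖_F²) ‖e‖²`,
where `P_i` is the orthogonal projection onto `span (a_i)`. -/
theorem randomized_kaczmarz_any_distribution_one_step
    {M N : ℕ}
    (A : Matrix (Fin M) (Fin N) ℝ) (hrank : A.rank = N)
    (hrows : ∀ i, A i ≠ 0)
    (p : Fin M → ℝ) (hp : ∀ i, 0 < p i) (hpsum : ∑ i, p i = 1)
    (B : Matrix (Fin M) (Fin N) ℝ)
    (hB : ∀ i j, B i j = Real.sqrt (p i) * (A i j / Real.sqrt (∑ c, A i c ^ 2)))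
    (σ : ℝ)
    (hσ : σ = sInf ((fun x : EuclideanSpace ℝ (Fin N) =>
      ‖(WithLp.equiv 2 (Fin M → ℝ)).symm (B.mulVec x)‖) '' {x | ‖x‖ = 1}))
    (P : Fin M → EuclideanSpace ℝ (Fin N) → EuclideanSpace ℝ (Fin N))
    (hP : ∀ (i : Fin M) (v : EuclideanSpace ℝ (Fin N)),
      P i v = ((∑ j, A i j * v j) / ∑ j, A i j ^ 2) • (WithLp.equiv 2 (Fin N → ℝ)).symm (A i))
    (e : EuclideanSpace ℝ (Fin N)) :
    ∑ i, p i * ‖e - P i e‖ ^ 2 ≤ (1 - σ ^ 2 / ∑ i, ∑ j, B i j ^ 2) * ‖e‖ ^ 2 := by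
  classical
  set s : Fin M → ℝ := fun i => ∑ j, A i j ^ 2 with hsdef
  set c : Fin M → ℝ := fun i => ∑ j, A i j * e j with hcdef
  have hs : ∀ i, 0 < s i := by
    intro i
    obtain ⟨j, hj⟩ : ∃ j, A i j ≠ 0 := by
      by_contra h'; push_neg at h'; exact hrows i (funext h')
    exact Finset.sum_pos' (fun k _ => sq_nonneg _) ⟨j, Finset.mem_univ j, by positivity⟩
  -- Frobenius norm of B squared is 1
  have hBsq : ∀ i j, B i j ^ 2 = p i * (A i j ^ 2 / s i) := by
    intro i j
    rw [hB, mul_pow, div_pow, Real.sq_sqrt (hp i).le,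
      Real.sq_sqrt (by positivity : (0:ℝ) ≤ ∑ c, A i c ^ 2)]
  have hF : ∑ i, ∑ j, B i j ^ 2 = 1 := by
    rw [← hpsum]
    refine Finset.sum_congr rfl fun i _ => ?_
    simp_rw [hBsq i, ← Finset.mul_sum, ← Finset.sum_div]
    rw [div_self (hs i).ne', mul_one]
  -- per-term error
  have hterm : ∀ i, ‖e - P i e‖ ^ 2 = ‖e‖ ^ 2 - c i ^ 2 / s i := by
    intro i
    set a : EuclideanSpace ℝ (Fin N) := (WithLp.equiv 2 (Fin N → ℝ)).symm (A i) with hadef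
    have hae : ⟪e, a⟫ = c i := by
      simp [PiLp.inner_apply, RCLike.inner_apply, hadef, hcdef, mul_comm]
    have hna : ‖a‖ ^ 2 = s i := by
      rw [eucl_norm_sq]; simp [hadef, hsdef]
    rw [hP, norm_sub_sq_real, real_inner_smul_right, norm_smul, hae, mul_pow, hna]
    have h1 : (∑ j, A i j * e j) = c i := rfl
    have h2 : (∑ j, A i j ^ 2) = s i := rfl
    rw [h1, h2]
    have hsne := (hs i).ne'
    rw [Real.norm_eq_abs, sq_abs, div_pow]
    field_simp
    ring
  -- norm of B e
  have hBe : ‖(WithLp.equiv 2 (Fin M → ℝ)).symm (B.mulVec e)‖ ^ 2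
      = ∑ i, p i * (c i ^ 2 / s i) := by
    rw [eucl_norm_sq]
    refine Finset.sum_congr rfl fun i _ => ?_
    have hentry : (WithLp.equiv 2 (Fin M → ℝ)).symm (B.mulVec e) i
        = Real.sqrt (p i) / Real.sqrt (s i) * c i := by
      simp only [WithLp.equiv_symm_apply, PiLp.toLp_apply, Matrix.mulVec, dotProduct]
      rw [hcdef, Finset.mul_sum]
      refine Finset.sum_congr rfl fun j _ => ?_
      rw [hB]; ring
    rw [hentry, mul_pow, div_pow, Real.sq_sqrt (hp i).le, Real.sq_sqrt (hs i).le]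
    ring
  -- σ² ‖e‖² ≤ ‖B e‖²
  have hσ0 : 0 ≤ σ := by
    rw [hσ]
    exact Real.sInf_nonneg (by rintro x ⟨y, -, rfl⟩; exact norm_nonneg _)
  have hkey : σ ^ 2 * ‖e‖ ^ 2 ≤ ∑ i, p i * (c i ^ 2 / s i) := by
    rw [← hBe]
    rcases eq_or_ne e 0 with he | he
    · simp [he]
    · have hne : (0:ℝ) < ‖e‖ := norm_pos_iff.mpr he
      set u : EuclideanSpace ℝ (Fin N) := ‖e‖⁻¹ • e with hudef
      have hu : ‖u‖ = 1 := norm_smul_inv_norm he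
      have hmem : ‖(WithLp.equiv 2 (Fin M → ℝ)).symm (B.mulVec u)‖ ∈
          ((fun x : EuclideanSpace ℝ (Fin N) =>
            ‖(WithLp.equiv 2 (Fin M → ℝ)).symm (B.mulVec x)‖) '' {x | ‖x‖ = 1}) :=
        ⟨u, hu, rfl⟩
      have hbdd : BddBelow ((fun x : EuclideanSpace ℝ (Fin N) =>
          ‖(WithLp.equiv 2 (Fin M → ℝ)).symm (B.mulVec x)‖) '' {x | ‖x‖ = 1}) :=
        ⟨0, by rintro x ⟨y, -, rfl⟩; exact norm_nonneg _⟩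
      have hle : σ ≤ ‖(WithLp.equiv 2 (Fin M → ℝ)).symm (B.mulVec u)‖ := by
        rw [hσ]; exact csInf_le hbdd hmem
      have hBu : (WithLp.equiv 2 (Fin M → ℝ)).symm (B.mulVec u)
          = ‖e‖⁻¹ • (WithLp.equiv 2 (Fin M → ℝ)).symm (B.mulVec e) := by
        have : B.mulVec u = ‖e‖⁻¹ • B.mulVec e := by
          rw [hudef]
          exact B.mulVec_smul ‖e‖⁻¹ (WithLp.equiv 2 (Fin N → ℝ) e)
        rw [this]; rfl
      rw [hBu, norm_smul, Real.norm_eq_abs, abs_of_pos (by positivity)] at hle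
      have := mul_le_mul hle hle hσ0 (by positivity)
      calc σ ^ 2 * ‖e‖ ^ 2 = (σ * σ) * ‖e‖ ^ 2 := by ring
        _ ≤ (‖e‖⁻¹ * ‖(WithLp.equiv 2 (Fin M → ℝ)).symm (B.mulVec e)‖
            * (‖e‖⁻¹ * ‖(WithLp.equiv 2 (Fin M → ℝ)).symm (B.mulVec e)‖)) * ‖e‖ ^ 2 := by
          exact mul_le_mul_of_nonneg_right this (by positivity)
        _ = ‖(WithLp.equiv 2 (Fin M → ℝ)).symm (B.mulVec e)‖ ^ 2 := by
          field_simp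
  -- combine
  calc ∑ i, p i * ‖e - P i e‖ ^ 2
      = ∑ i, (p i * ‖e‖ ^ 2 - p i * (c i ^ 2 / s i)) := by
        refine Finset.sum_congr rfl fun i _ => ?_
        rw [hterm i]; ring
    _ = ‖e‖ ^ 2 - ∑ i, p i * (c i ^ 2 / s i) := by
        rw [Finset.sum_sub_distrib, ← Finset.sum_mul, hpsum, one_mul]
    _ ≤ ‖e‖ ^ 2 - σ ^ 2 * ‖e‖ ^ 2 := by linarith [hkey]
    _ = (1 - σ ^ 2 / ∑ i, ∑ j, B i j ^ 2) * ‖e‖ ^ 2 := by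
        rw [hF, div_one]; ring
end
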